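/- arXiv:2311.15388 — 5 statements merged into one kernel-verified Lean document; each statement's English description precedes it below -/
import Mathlib

section
/- The expected number of parts of a uniformly random Arndt composition of n is asymptotically (3/√5 − 1)·n; that is, the real sequence p(n) / (F_n · n) tends to 3/√5 − 1 as n → ∞. -/
/-- `l` is a composition of `n`: a finite list of positive integers summing to `n`
(the empty list is the unique composition of `0`). -/
def IsComposition (n : ℕ) (l : List ℕ) : Prop :=
  (∀ x ∈ l, 0 < x) ∧ l.sum = n

/-- The Arndt condition: `σ_{2i-1} > σ_{2i}` (1-based) for every `i` with `2i ≤ ℓ`;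
with 0-based indices, `l[2i] > l[2i+1]` whenever `2i+1 < l.length`. -/
def IsArndt (l : List ℕ) : Prop :=
  ∀ i : ℕ, 2 * i + 1 < l.length → l.getD (2 * i + 1) 0 < l.getD (2 * i) 0

/-- `arndt n` is the number of Arndt compositions of `n`. -/
noncomputable def arndt (n : ℕ) : ℕ :=
  Set.ncard {l : List ℕ | IsComposition n l ∧ IsArndt l}

/-- `arndtParts n m` is the number of Arndt compositions of `n` with exactly `m` parts. -/
noncomputable def arndtParts (n m : ℕ) : ℕ :=
  Set.ncard {l : List ℕ | IsComposition n l ∧ IsArndt l ∧ l.length = m}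

/-- The generalized binomial coefficient `C(a,b) = a(a-1)⋯(a-b+1)/b!` for an integer `a`
and a natural number `b` (represented as a nonnegative integer); it is `0` for negative `b`. -/
def genChoose (a b : ℤ) : ℤ :=
  if 0 ≤ b then (∏ i ∈ Finset.range b.toNat, (a - (i : ℤ))) / (b.toNat.factorial : ℤ) else 0

/-- `totalParts n` is the total number of parts summed over all Arndt compositions of `n`. -/
noncomputable def totalParts (n : ℕ) : ℕ :=
  ∑ᶠ l ∈ {l : List ℕ | IsComposition n l ∧ IsArndt l}, l.length

instance : DecidablePred IsArndt := fun l =>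
  decidable_of_iff (∀ i < l.length, 2 * i + 1 < l.length → l.getD (2 * i + 1) 0 < l.getD (2 * i) 0)
    ⟨fun h i hi => h i (by omega) hi, fun h i _ hi => h i hi⟩

noncomputable def L (n : ℕ) : Finset (List ℕ) :=
  ((Finset.univ : Finset (Composition n)).image Composition.blocks).filter IsArndt

lemma mem_L {n : ℕ} {l : List ℕ} : l ∈ L n ↔ IsComposition n l ∧ IsArndt l := by
  simp only [L, Finset.mem_filter, Finset.mem_image, Finset.mem_univ, true_and]
  constructor
  · rintro ⟨⟨c, rfl⟩, h⟩
    exact ⟨⟨fun x hx => c.blocks_pos hx, c.blocks_sum⟩, h⟩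
  · rintro ⟨⟨hpos, hsum⟩, h⟩
    exact ⟨⟨⟨l, fun {x} hx => hpos x hx, hsum⟩, rfl⟩, h⟩

lemma setL (n : ℕ) : {l : List ℕ | IsComposition n l ∧ IsArndt l} = ↑(L n) :=
  Set.ext fun l => by simp [mem_L]

lemma isArndt_cons_cons {a b : ℕ} {l : List ℕ} :
    IsArndt (a :: b :: l) ↔ b < a ∧ IsArndt l := by
  constructor
  · intro h
    refine ⟨by simpa using h 0 (by simp), fun i hi => ?_⟩
    have h' := h (i + 1) (by simp only [List.length_cons]; omega)
    simpa [show 2 * (i + 1) + 1 = (2 * i + 1) + 1 + 1 from by ring,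
      show 2 * (i + 1) = (2 * i) + 1 + 1 from by ring, List.getD_cons_succ] using h'
  · rintro ⟨hba, h⟩ i hi
    match i with
    | 0 => simpa using hba
    | j + 1 =>
      have hj : 2 * j + 1 < l.length := by simp only [List.length_cons] at hi; omega
      have := h j hj
      simpa [show 2 * (j + 1) + 1 = (2 * j + 1) + 1 + 1 from by ring,
        show 2 * (j + 1) = (2 * j) + 1 + 1 from by ring, List.getD_cons_succ] using this

def Pset (n : ℕ) : Finset (ℕ × ℕ) :=
  (Finset.range (n + 1) ×ˢ Finset.range (n + 1)).filter fun q => 0 < q.2 ∧ q.2 < q.1 ∧ q.1 + q.2 ≤ n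

lemma mem_Pset {n : ℕ} {q : ℕ × ℕ} :
    q ∈ Pset n ↔ 0 < q.2 ∧ q.2 < q.1 ∧ q.1 + q.2 ≤ n := by
  simp only [Pset, Finset.mem_filter, Finset.mem_product, Finset.mem_range]
  omega

lemma sum_L_decomp (n : ℕ) (hn : 1 ≤ n) (f : List ℕ → ℕ) :
    ∑ l ∈ L n, f l
      = f [n] + ∑ q ∈ Pset n, ∑ l ∈ L (n - q.1 - q.2), f (q.1 :: q.2 :: l) := by
  rw [← Finset.sum_filter_add_sum_filter_not (L n) (fun l => l.length = 1)]
  congr 1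
  · have h1 : (L n).filter (fun l => l.length = 1) = {[n]} := by
      ext l
      simp only [Finset.mem_filter, mem_L, Finset.mem_singleton]
      constructor
      · rintro ⟨⟨⟨hpos, hsum⟩, _⟩, hlen⟩
        match l with
        | [x] => simp at hsum; simp [hsum]
      · rintro rfl
        refine ⟨⟨⟨by simp; omega, by simp⟩, fun i hi => by simp at hi⟩, rfl⟩
    rw [h1, Finset.sum_singleton]
  · rw [Finset.sum_sigma']
    refine Finset.sum_nbij' (fun l => ⟨(l.headI, l.tail.headI), l.drop 2⟩)
      (fun x => x.1.1 :: x.1.2 :: x.2) ?_ ?_ ?_ ?_ ?_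
    · intro l hl
      rw [Finset.mem_filter, mem_L] at hl
      obtain ⟨⟨⟨hpos, hsum⟩, ha⟩, hlen⟩ := hl
      match l with
      | [] => simp at hsum; omega
      | [x] => simp at hlen
      | a :: b :: t =>
        rw [isArndt_cons_cons] at ha
        simp only [List.sum_cons] at hsum
        have hb : 0 < b := hpos b (by simp)
        have ha' : 0 < a := hpos a (by simp)
        simp only [Finset.mem_sigma, mem_Pset, List.headI, List.tail_cons, List.drop]
        refine ⟨⟨hb, ha.1, by omega⟩, ?_⟩
        rw [mem_L]
        exact ⟨⟨fun x hx => hpos x (by simp [hx]), by omega⟩, ha.2⟩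
    · rintro ⟨⟨a, b⟩, t⟩ hx
      simp only [Finset.mem_sigma, mem_Pset] at hx
      obtain ⟨⟨hb, hba, hab⟩, ht⟩ := hx
      rw [mem_L] at ht
      obtain ⟨⟨hpos, hsum⟩, ha⟩ := ht
      dsimp only
      rw [Finset.mem_filter]
      constructor
      · rw [mem_L]
        refine ⟨⟨?_, ?_⟩, isArndt_cons_cons.mpr ⟨hba, ha⟩⟩
        · intro x hx
          simp only [List.mem_cons] at hx
          rcases hx with rfl | rfl | h
          · omega
          · omega
          · exact hpos x h
        · simp only [List.sum_cons, hsum]; omega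
      · simp
    · intro l hl
      rw [Finset.mem_filter, mem_L] at hl
      obtain ⟨⟨⟨hpos, hsum⟩, ha⟩, hlen⟩ := hl
      match l with
      | [] => simp at hsum; omega
      | [x] => simp at hlen
      | a :: b :: t => rfl
    · rintro ⟨⟨a, b⟩, t⟩ _; rfl
    · intro l hl
      rw [Finset.mem_filter, mem_L] at hl
      obtain ⟨⟨⟨hpos, hsum⟩, ha⟩, hlen⟩ := hl
      match l with
      | [] => simp at hsum; omega
      | [x] => simp at hlen
      | a :: b :: t => rfl

lemma sum_Pset_shift (n : ℕ) (h : ℕ → ℕ) :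
    ∑ q ∈ Pset (n + 2), h (n + 2 - q.1 - q.2)
      = ∑ q ∈ Pset n, h (n - q.1 - q.2) + ∑ m ∈ Finset.range n, h m := by
  rw [← Finset.sum_filter_add_sum_filter_not (Pset (n+2)) (fun q => q.2 = 1)]
  rw [add_comm]
  congr 1
  · -- q.2 ≠ 1 part ↔ Pset n
    refine (Finset.sum_nbij' (fun q => (q.1 + 1, q.2 + 1)) (fun q => (q.1 - 1, q.2 - 1))
      ?_ ?_ ?_ ?_ ?_).symm
    · intro q hq
      simp only [mem_Pset] at hq
      simp only [Finset.mem_filter, mem_Pset]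
      omega
    · intro q hq
      simp only [Finset.mem_filter, mem_Pset] at hq
      simp only [mem_Pset]
      omega
    · intro q hq
      simp only [mem_Pset] at hq
      obtain ⟨x, y⟩ := q
      simp only [Prod.mk.injEq]
      omega
    · intro q hq
      simp only [Finset.mem_filter, mem_Pset] at hq
      obtain ⟨x, y⟩ := q
      simp only [Prod.mk.injEq]
      omega
    · intro q hq
      simp only [mem_Pset] at hq
      dsimp only
      congr 1
      omega
  · -- q.2 = 1 part ↔ range n
    refine (Finset.sum_nbij' (fun m => (n + 1 - m, 1)) (fun q => n + 1 - q.1)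
      ?_ ?_ ?_ ?_ ?_).symm
    · intro m hm
      simp only [Finset.mem_range] at hm
      simp only [Finset.mem_filter, mem_Pset, and_true]
      omega
    · intro q hq
      simp only [Finset.mem_filter, mem_Pset] at hq
      simp only [Finset.mem_range]
      omega
    · intro m hm
      simp only [Finset.mem_range] at hm
      dsimp only
      omega
    · intro q hq
      simp only [Finset.mem_filter, mem_Pset] at hq
      obtain ⟨x, y⟩ := q
      simp only [Prod.mk.injEq]
      simp only at hq
      omega
    · intro m hm
      simp only [Finset.mem_range] at hm
      dsimp only
      congr 1
      omega

noncomputable def A (n : ℕ) : ℕ := (L n).card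
noncomputable def Pp (n : ℕ) : ℕ := ∑ l ∈ L n, l.length

lemma card_L (n : ℕ) (hn : 1 ≤ n) :
    A n = 1 + ∑ q ∈ Pset n, A (n - q.1 - q.2) := by
  have h := sum_L_decomp n hn (fun _ => 1)
  rw [A, Finset.card_eq_sum_ones, h]
  congr 1
  refine Finset.sum_congr rfl fun q _ => ?_
  rw [A, Finset.card_eq_sum_ones]

lemma len_L (n : ℕ) (hn : 1 ≤ n) :
    Pp n = 1 + ∑ q ∈ Pset n, (Pp (n - q.1 - q.2) + 2 * A (n - q.1 - q.2)) := by
  have := sum_L_decomp n hn (fun l => l.length)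
  simp only [List.length_cons, List.length] at this
  rw [Pp, this]
  congr 1
  refine Finset.sum_congr rfl fun q hq => ?_
  rw [Pp, A, Finset.card_eq_sum_ones, Finset.mul_sum, ← Finset.sum_add_distrib]
  refine Finset.sum_congr rfl fun l hl => by omega

lemma L_zero : L 0 = {[]} := by
  ext l
  rw [mem_L, Finset.mem_singleton]
  constructor
  · rintro ⟨⟨hpos, hsum⟩, _⟩
    rcases List.sum_eq_zero_iff.mp hsum with h
    cases l with
    | nil => rfl
    | cons a t => exact absurd (h a (by simp)) (by have := hpos a (by simp); omega)
  · rintro rfl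
    exact ⟨⟨by simp, by simp⟩, fun i hi => by simp at hi⟩

lemma A_zero : A 0 = 1 := by rw [A, L_zero]; simp
lemma Pp_zero : Pp 0 = 0 := by rw [Pp, L_zero]; simp

lemma Pset_one : Pset 1 = ∅ := by
  ext q; rw [mem_Pset]; simp; omega
lemma Pset_two : Pset 2 = ∅ := by
  ext q; rw [mem_Pset]; simp; omega
lemma Pset_three : Pset 3 = {(2,1)} := by
  ext q; rw [mem_Pset, Finset.mem_singleton, Prod.ext_iff]; omega

lemma A_one : A 1 = 1 := by rw [card_L 1 le_rfl, Pset_one]; simp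
lemma A_two : A 2 = 1 := by rw [card_L 2 (by omega), Pset_two]; simp
lemma A_three : A 3 = 2 := by
  rw [card_L 3 (by omega), Pset_three, Finset.sum_singleton]
  norm_num [A_zero]
lemma Pp_one : Pp 1 = 1 := by rw [len_L 1 le_rfl, Pset_one]; simp
lemma Pp_two : Pp 2 = 1 := by rw [len_L 2 (by omega), Pset_two]; simp
lemma Pp_three : Pp 3 = 3 := by
  rw [len_L 3 (by omega), Pset_three, Finset.sum_singleton]
  norm_num [A_zero, Pp_zero]

lemma A_rec (n : ℕ) (hn : 1 ≤ n) :
    A (n + 3) = A (n + 2) + A (n + 1) := by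
  have e1 : A (n + 2) = A n + ∑ m ∈ Finset.range n, A m := by
    rw [card_L (n+2) (by omega), sum_Pset_shift n A, ← add_assoc, ← card_L n hn]
  have e2 : A (n + 3) = A (n + 1) + (∑ m ∈ Finset.range n, A m + A n) := by
    rw [card_L (n+3) (by omega), show n + 3 = (n+1) + 2 from rfl, sum_Pset_shift (n+1) A,
      ← add_assoc, ← card_L (n+1) (by omega), Finset.sum_range_succ]
  omega

lemma Pp_rec (n : ℕ) (hn : 1 ≤ n) :
    Pp (n + 3) = Pp (n + 2) + Pp (n + 1) + 2 * A n := by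
  set h : ℕ → ℕ := fun m => Pp m + 2 * A m with hh
  have e1 : Pp (n + 2) = Pp n + ∑ m ∈ Finset.range n, h m := by
    rw [len_L (n+2) (by omega), sum_Pset_shift n h, ← add_assoc, ← len_L n hn]
  have e2 : Pp (n + 3) = Pp (n + 1) + (∑ m ∈ Finset.range n, h m + h n) := by
    rw [len_L (n+3) (by omega), show n + 3 = (n+1) + 2 from rfl, sum_Pset_shift (n+1) h,
      ← add_assoc, ← len_L (n+1) (by omega), Finset.sum_range_succ]
  have : h n = Pp n + 2 * A n := rfl
  omega

lemma A_fib : ∀ n : ℕ, A (n+1) = Nat.fib (n+1) ∧ A (n+2) = Nat.fib (n+2) ∧ A (n+3) = Nat.fib (n+3) := by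
  intro n
  induction n with
  | zero =>
    refine ⟨by rw [A_one]; rfl, by rw [A_two]; rfl, by rw [A_three]; rfl⟩
  | succ k ih =>
    refine ⟨ih.2.1, ih.2.2, ?_⟩
    have h : A (k+4) = A (k+3) + A (k+2) := A_rec (k+1) (by omega)
    rw [show k+1+3 = k+4 from rfl] at *
    rw [h, ih.2.2, ih.2.1, add_comm]
    exact (Nat.fib_add_two (n := k+2)).symm

lemma A_eq_fib (n : ℕ) (hn : 1 ≤ n) : A n = Nat.fib n := by
  match n, hn with
  | n + 1, _ => exact (A_fib n).1

def Cc (k : ℕ) : Prop :=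
  (5:ℤ) * Pp k = (27 - 8*(k:ℤ)) * Nat.fib k + (6*(k:ℤ) - 15) * Nat.fib (k+1)

lemma Pp_closed : ∀ n : ℕ, Cc (n+2) ∧ Cc (n+3) := by
  intro n
  induction n with
  | zero =>
    constructor
    · show (5:ℤ) * Pp 2 = _
      rw [Pp_two, show Nat.fib 2 = 1 from rfl, show Nat.fib 3 = 2 from rfl]
      norm_num
    · show (5:ℤ) * Pp 3 = _
      rw [Pp_three, show Nat.fib 3 = 2 from rfl, show Nat.fib 4 = 3 from rfl]
      norm_num
  | succ k ih =>
    refine ⟨ih.2, ?_⟩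
    have h2 := ih.1
    have h3 := ih.2
    unfold Cc at h2 h3 ⊢
    have hrecN : Pp (k+4) = Pp (k+3) + Pp (k+2) + 2 * A (k+1) := Pp_rec (k+1) (by omega)
    rw [A_eq_fib (k+1) (by omega)] at hrecN
    have hrec : (Pp (k+4) : ℤ) = Pp (k+3) + Pp (k+2) + 2 * Nat.fib (k+1) := by
      exact_mod_cast congrArg (fun x : ℕ => (x : ℤ)) hrecN
    have F5 : (Nat.fib (k+5) : ℤ) = Nat.fib (k+3) + Nat.fib (k+4) := by
      exact_mod_cast congrArg (fun x : ℕ => (x : ℤ)) (Nat.fib_add_two (n := k+3))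
    have F4 : (Nat.fib (k+4) : ℤ) = Nat.fib (k+2) + Nat.fib (k+3) := by
      exact_mod_cast congrArg (fun x : ℕ => (x : ℤ)) (Nat.fib_add_two (n := k+2))
    have F3 : (Nat.fib (k+3) : ℤ) = Nat.fib (k+1) + Nat.fib (k+2) := by
      exact_mod_cast congrArg (fun x : ℕ => (x : ℤ)) (Nat.fib_add_two (n := k+1))
    rw [show k+1+3 = k+4 from rfl, show k+4+1 = k+5 from rfl]
    rw [show k+2+1 = k+3 from rfl, F3] at h2
    rw [show k+3+1 = k+4 from rfl, F4, F3] at h3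
    rw [hrec, F5, F4, F3]
    push_cast
    push_cast at h2 h3
    linear_combination h2 + h3

lemma totalParts_eq (n : ℕ) : totalParts n = Pp n := by
  rw [totalParts, setL, finsum_mem_coe_finset]
  rfl

open Filter Real

lemma abs_goldConj_lt_one : |goldenConj| < 1 := by
  rw [abs_lt]
  constructor
  · exact neg_one_lt_goldenConj
  · linarith [goldenConj_neg]

lemma ratio_tendsto :
    Tendsto (fun n : ℕ => (Nat.fib (n+1) : ℝ) / (Nat.fib n : ℝ)) atTop (nhds goldenRatio) := by
  have h0 : Tendsto (fun n : ℕ => goldenConj ^ n / (Nat.fib n : ℝ)) atTop (nhds 0) := by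
    apply squeeze_zero_norm (a := fun n : ℕ => |goldenConj| ^ n) ?_ ?_
    · intro n
      rw [norm_div, norm_pow]
      rcases Nat.eq_zero_or_pos (Nat.fib n) with h | h
      · simp [h]
      · have h1 : (1:ℝ) ≤ ‖(Nat.fib n : ℝ)‖ := by
          rw [Real.norm_natCast]
          exact_mod_cast h
        calc ‖goldenConj‖ ^ n / ‖(Nat.fib n : ℝ)‖ ≤ ‖goldenConj‖ ^ n / 1 := by
              apply div_le_div_of_nonneg_left (by positivity) (by norm_num) h1
          _ = |goldenConj| ^ n := by rw [div_one]; rfl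
    · exact tendsto_pow_atTop_nhds_zero_of_lt_one (abs_nonneg _) abs_goldConj_lt_one
  have h1 : Tendsto (fun n : ℕ => goldenRatio + goldenConj ^ n / (Nat.fib n : ℝ)) atTop
      (nhds goldenRatio) := by
    have := (tendsto_const_nhds :
      Tendsto (fun _ : ℕ => goldenRatio) atTop (nhds goldenRatio)).add h0
    simpa using this
  apply h1.congr'
  filter_upwards [eventually_ge_atTop 1] with n hn
  have hf : (Nat.fib n : ℝ) ≠ 0 := by
    have := Nat.fib_pos.mpr hn
    positivity
  have key := fib_succ_sub_goldenRatio_mul_fib n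
  have hfib : (Nat.fib (n+1) : ℝ) = goldenRatio * Nat.fib n + goldenConj ^ n := by
    linarith [key]
  rw [hfib, add_div, mul_div_assoc, div_self hf, mul_one]

lemma fib_ne_zero_real {n : ℕ} (hn : 1 ≤ n) : (Nat.fib n : ℝ) ≠ 0 := by
  have := Nat.fib_pos.mpr hn
  positivity

/-- the expected number of parts of a uniformly random Arndt composition of `n`
is asymptotically `(3/√5 - 1)·n`, i.e. `p(n)/(F_n·n) → 3/√5 - 1`. -/
theorem expected_parts_asymptotic :
    Filter.Tendsto (fun n : ℕ => (totalParts n : ℝ) / ((Nat.fib n : ℝ) * (n : ℝ)))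
      Filter.atTop (nhds (3 / Real.sqrt 5 - 1)) := by
  have t1 : Tendsto (fun n : ℕ => (27 - 8 * (n:ℝ)) / (5 * (n:ℝ))) atTop (nhds (-(8/5))) := by
    have h := (tendsto_const_div_atTop_nhds_zero_nat (27/5)).sub
      (tendsto_const_nhds : Tendsto (fun _ : ℕ => (8/5 : ℝ)) atTop (nhds (8/5)))
    rw [zero_sub] at h
    apply h.congr'
    filter_upwards [eventually_ge_atTop 1] with n hn
    have : (n:ℝ) ≠ 0 := Nat.cast_ne_zero.mpr (by omega)
    field_simp
  have t2 : Tendsto (fun n : ℕ => (6 * (n:ℝ) - 15) / (5 * (n:ℝ))) atTop (nhds (6/5)) := by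
    have h := (tendsto_const_nhds : Tendsto (fun _ : ℕ => (6/5 : ℝ)) atTop (nhds (6/5))).sub
      (tendsto_const_div_atTop_nhds_zero_nat 3)
    rw [sub_zero] at h
    apply h.congr'
    filter_upwards [eventually_ge_atTop 1] with n hn
    have : (n:ℝ) ≠ 0 := Nat.cast_ne_zero.mpr (by omega)
    field_simp
    ring
  have tt : Tendsto (fun n : ℕ =>
      (27 - 8 * (n:ℝ)) / (5 * (n:ℝ)) + (6 * (n:ℝ) - 15) / (5 * (n:ℝ)) * ((Nat.fib (n+1) : ℝ) / (Nat.fib n : ℝ)))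
      atTop (nhds (-(8/5) + 6/5 * goldenRatio)) := t1.add (t2.mul ratio_tendsto)
  have hval : (-(8/5) : ℝ) + 6/5 * goldenRatio = 3 / Real.sqrt 5 - 1 := by
    have h5 : Real.sqrt 5 * Real.sqrt 5 = 5 := Real.mul_self_sqrt (by norm_num)
    have h5pos : (0:ℝ) < Real.sqrt 5 := Real.sqrt_pos.mpr (by norm_num)
    have h3 : (3:ℝ)/Real.sqrt 5 = 3 * Real.sqrt 5 / 5 := by
      rw [div_eq_div_iff h5pos.ne' (by norm_num : (5:ℝ) ≠ 0)]
      linear_combination (-3:ℝ) * h5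
    rw [goldenRatio, h3]
    ring
  rw [← hval]
  apply tt.congr'
  filter_upwards [eventually_ge_atTop 2] with n hn
  have hC : Cc n := by
    obtain ⟨m, rfl⟩ : ∃ m, n = m + 2 := ⟨n - 2, by omega⟩
    exact (Pp_closed m).1
  rw [Cc] at hC
  have hPp : (Pp n : ℝ) = ((27 - 8*(n:ℝ)) * Nat.fib n + (6*(n:ℝ) - 15) * Nat.fib (n+1)) / 5 := by
    have := congrArg (fun x : ℤ => (x : ℝ)) hC
    push_cast at this
    linarith
  have hf : (Nat.fib n : ℝ) ≠ 0 := fib_ne_zero_real (by omega)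
  have hn0 : (n:ℝ) ≠ 0 := Nat.cast_ne_zero.mpr (by omega)
  rw [totalParts_eq, hPp]
  field_simp
end

section
/- For all integers n, m ≥ 0, the number of anti-palindromic compositions of n with exactly m parts equals 2^{⌊m/2⌋} times the number of Arndt compositions of n with exactly m parts: ap(n,m) = 2^{⌊m/2⌋} · a(n,m). Equivalently, the number of Arndt compositions of n with m parts equals the number of reduced anti-palindromic compositions (flip-equivalence classes of anti-palindromic compositions, each class having size 2^{⌊m/2⌋}) of n with m parts. -/
/-- A composition `σ = (σ₁, …, σ_ℓ)` is anti-palindromic if `σ_i ≠ σ_{ℓ+1-i}` whenever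
`i ≠ ℓ+1-i`; in 0-based indexing, `l[i] ≠ l[ℓ-1-i]` whenever `2i+1 ≠ ℓ`. -/
def IsAntiPalindromic (l : List ℕ) : Prop :=
  ∀ i : ℕ, i < l.length → 2 * i + 1 ≠ l.length →
    l.getD i 0 ≠ l.getD (l.length - 1 - i) 0

/-- `antiPalParts n m` is the number of anti-palindromic compositions of `n`
with exactly `m` parts. -/
noncomputable def antiPalParts (n m : ℕ) : ℕ :=
  Set.ncard {l : List ℕ | IsComposition n l ∧ IsAntiPalindromic l ∧ l.length = m}

/-! ### Structural lemmas -/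

lemma isArndt_nil : IsArndt [] := by intro i hi; simp at hi

lemma isArndt_singleton (x : ℕ) : IsArndt [x] := by
  intro i hi; simp at hi

lemma isArndt_cons_cons_s12 (x y : ℕ) (t : List ℕ) :
    IsArndt (x :: y :: t) ↔ y < x ∧ IsArndt t := by
  constructor
  · intro h
    refine ⟨?_, ?_⟩
    · have := h 0 (by simp)
      simpa using this
    · intro j hj
      have := h (j+1) (by simp; omega)
      have e1 : 2 * (j+1) + 1 = (2*j+1) + 1 + 1 := by ring
      have e2 : 2 * (j+1) = (2*j) + 1 + 1 := by ring
      rw [e1, e2] at this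
      simpa [List.getD_cons_succ] using this
  · rintro ⟨hxy, ht⟩ i hi
    match i with
    | 0 => simpa using hxy
    | j+1 =>
      have hj : 2 * j + 1 < t.length := by simp at hi; omega
      have := ht j hj
      have e1 : 2 * (j+1) + 1 = (2*j+1) + 1 + 1 := by ring
      have e2 : 2 * (j+1) = (2*j) + 1 + 1 := by ring
      rw [e1, e2]
      simpa [List.getD_cons_succ] using this

lemma isAntiPal_nil : IsAntiPalindromic [] := by intro i hi; simp at hi

lemma isAntiPal_singleton (x : ℕ) : IsAntiPalindromic [x] := by
  intro i hi h2
  simp only [List.length_singleton] at hi h2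
  exfalso; omega

lemma getD_mid (x y : ℕ) (t : List ℕ) (j : ℕ) (hj : j < t.length) :
    (x :: (t ++ [y])).getD (j+1) 0 = t.getD j 0 := by
  rw [List.getD_cons_succ, List.getD_append t [y] 0 j hj]

lemma getD_last (x y : ℕ) (t : List ℕ) :
    (x :: (t ++ [y])).getD (t.length + 1) 0 = y := by
  rw [List.getD_cons_succ, List.getD_eq_getElem?_getD]
  simp

lemma isAntiPal_cons_concat (x y : ℕ) (t : List ℕ) :
    IsAntiPalindromic (x :: (t ++ [y])) ↔ x ≠ y ∧ IsAntiPalindromic t := by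
  have hlen : (x :: (t ++ [y])).length = t.length + 2 := by simp
  constructor
  · intro h
    refine ⟨?_, ?_⟩
    · have := h 0 (by simp) (by omega)
      rw [hlen] at this
      have e : t.length + 2 - 1 - 0 = t.length + 1 := by omega
      rw [e] at this
      simpa [getD_last] using this
    · intro j hj h2
      have := h (j+1) (by rw [hlen]; omega) (by rw [hlen]; omega)
      rw [hlen] at this
      have e : t.length + 2 - 1 - (j+1) = (t.length - 1 - j) + 1 := by omega
      rw [e, getD_mid x y t j hj, getD_mid x y t _ (by omega)] at this
      exact this
  · rintro ⟨hxy, ht⟩ i hi h2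
    rw [hlen] at hi h2 ⊢
    match i with
    | 0 =>
      have e : t.length + 2 - 1 - 0 = t.length + 1 := by omega
      rw [e, getD_last]
      simpa using hxy
    | j+1 =>
      by_cases hjt : j < t.length
      · have e : t.length + 2 - 1 - (j+1) = (t.length - 1 - j) + 1 := by omega
        rw [e, getD_mid x y t j hjt, getD_mid x y t _ (by omega)]
        exact ht j hjt (by omega)
      · have hje : j = t.length := by omega
        subst hje
        have e : t.length + 2 - 1 - (t.length + 1) = 0 := by omega
        rw [e, getD_last]
        simpa using hxy.symm

/-! ### The finsets -/

def arndtFinset : ℕ → ℕ → Finset (List ℕ)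
  | n, 0 => if n = 0 then {([] : List ℕ)} else ∅
  | n, 1 => if n = 0 then ∅ else {[n]}
  | n, (m+2) =>
      ((Finset.range (n+1)) ×ˢ (Finset.range (n+1))).biUnion fun p =>
        if 0 < p.2 ∧ p.2 < p.1 ∧ p.1 + p.2 ≤ n then
          (arndtFinset (n - p.1 - p.2) m).image (fun t => p.1 :: p.2 :: t)
        else ∅

def apFinset : ℕ → ℕ → Finset (List ℕ)
  | n, 0 => if n = 0 then {([] : List ℕ)} else ∅
  | n, 1 => if n = 0 then ∅ else {[n]}
  | n, (m+2) =>
      ((Finset.range (n+1)) ×ˢ (Finset.range (n+1))).biUnion fun p =>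
        if 0 < p.1 ∧ 0 < p.2 ∧ p.1 ≠ p.2 ∧ p.1 + p.2 ≤ n then
          (apFinset (n - p.1 - p.2) m).image (fun t => p.1 :: (t ++ [p.2]))
        else ∅

lemma single_le_sum_list {l : List ℕ} {x : ℕ} (hx : x ∈ l) : x ≤ l.sum :=
  List.single_le_sum (fun y _ => Nat.zero_le y) x hx

lemma mem_arndtFinset (m : ℕ) : ∀ (n : ℕ) (l : List ℕ),
    l ∈ arndtFinset n m ↔ IsComposition n l ∧ IsArndt l ∧ l.length = m := by
  induction m using Nat.strong_induction_on with
  | _ m ih =>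
    intro n l
    match m with
    | 0 =>
      by_cases hn : n = 0
      · simp only [arndtFinset]
        rw [if_pos hn]
        subst hn
        simp only [Finset.mem_singleton]
        constructor
        · rintro rfl; exact ⟨⟨by simp, rfl⟩, isArndt_nil, rfl⟩
        · rintro ⟨⟨_, hs⟩, _, hl⟩; exact List.length_eq_zero_iff.mp hl
      · simp only [arndtFinset, if_neg hn, Finset.notMem_empty, false_iff]
        rintro ⟨⟨_, hs⟩, _, hl⟩
        have hl0 : l = [] := List.length_eq_zero_iff.mp hl
        subst hl0
        simp at hs; omega
    | 1 =>
      by_cases hn : n = 0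
      · simp only [arndtFinset]
        rw [if_pos hn]
        subst hn
        simp only [Finset.notMem_empty, false_iff]
        rintro ⟨⟨hp, hs⟩, _, hl⟩
        obtain ⟨x, rfl⟩ := List.length_eq_one_iff.mp hl
        have := hp x (by simp)
        simp at hs; omega
      · simp only [arndtFinset, if_neg hn, Finset.mem_singleton]
        constructor
        · rintro rfl
          exact ⟨⟨by simpa using Nat.pos_of_ne_zero hn, by simp⟩, isArndt_singleton n, rfl⟩
        · rintro ⟨⟨hp, hs⟩, _, hl⟩
          obtain ⟨x, rfl⟩ := List.length_eq_one_iff.mp hl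
          simp at hs
          rw [hs]
    | m+2 =>
      simp only [arndtFinset, Finset.mem_biUnion, Finset.mem_product, Finset.mem_range]
      constructor
      · rintro ⟨⟨x, y⟩, ⟨hx, hy⟩, hmem⟩
        split at hmem
        · rename_i hcond
          obtain ⟨hy0, hyx, hsum⟩ := hcond
          simp only [Finset.mem_image] at hmem
          obtain ⟨t, ht, hl⟩ := hmem
          rw [ih m (by omega) _ t] at ht
          obtain ⟨⟨htp, hts⟩, hta, htl⟩ := ht
          subst hl
          refine ⟨⟨?_, ?_⟩, ?_, by simp [htl]⟩
          · intro z hz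
            simp at hz
            rcases hz with h | h | h
            · omega
            · omega
            · exact htp z h
          · simp [hts]; omega
          · rw [isArndt_cons_cons_s12]; exact ⟨hyx, hta⟩
        · simp at hmem
      · rintro ⟨⟨hp, hs⟩, ha, hl⟩
        match l with
        | x :: y :: t =>
          have hx0 : 0 < x := hp x (by simp)
          have hy0 : 0 < y := hp y (by simp)
          have hsum : x + y + t.sum = n := by simpa [add_assoc] using hs
          rw [isArndt_cons_cons_s12] at ha
          refine ⟨(x, y), ⟨by omega, by omega⟩, ?_⟩
          rw [if_pos ⟨hy0, ha.1, by omega⟩]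
          simp only [Finset.mem_image]
          refine ⟨t, ?_, rfl⟩
          rw [ih m (by omega) _ t]
          refine ⟨⟨fun z hz => hp z (by simp [hz]), by omega⟩, ha.2, by simpa using hl⟩

lemma mem_apFinset (m : ℕ) : ∀ (n : ℕ) (l : List ℕ),
    l ∈ apFinset n m ↔ IsComposition n l ∧ IsAntiPalindromic l ∧ l.length = m := by
  induction m using Nat.strong_induction_on with
  | _ m ih =>
    intro n l
    match m with
    | 0 =>
      by_cases hn : n = 0
      · simp only [apFinset]
        rw [if_pos hn]
        subst hn
        simp only [Finset.mem_singleton]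
        constructor
        · rintro rfl; exact ⟨⟨by simp, rfl⟩, isAntiPal_nil, rfl⟩
        · rintro ⟨⟨_, hs⟩, _, hl⟩; exact List.length_eq_zero_iff.mp hl
      · simp only [apFinset, if_neg hn, Finset.notMem_empty, false_iff]
        rintro ⟨⟨_, hs⟩, _, hl⟩
        have hl0 : l = [] := List.length_eq_zero_iff.mp hl
        subst hl0
        simp at hs; omega
    | 1 =>
      by_cases hn : n = 0
      · simp only [apFinset]
        rw [if_pos hn]
        subst hn
        simp only [Finset.notMem_empty, false_iff]
        rintro ⟨⟨hp, hs⟩, _, hl⟩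
        obtain ⟨x, rfl⟩ := List.length_eq_one_iff.mp hl
        have := hp x (by simp)
        simp at hs; omega
      · simp only [apFinset, if_neg hn, Finset.mem_singleton]
        constructor
        · rintro rfl
          exact ⟨⟨by simpa using Nat.pos_of_ne_zero hn, by simp⟩, isAntiPal_singleton n, rfl⟩
        · rintro ⟨⟨hp, hs⟩, _, hl⟩
          obtain ⟨x, rfl⟩ := List.length_eq_one_iff.mp hl
          simp at hs
          rw [hs]
    | m+2 =>
      simp only [apFinset, Finset.mem_biUnion, Finset.mem_product, Finset.mem_range]
      constructor
      · rintro ⟨⟨x, y⟩, ⟨hx, hy⟩, hmem⟩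
        split at hmem
        · rename_i hcond
          obtain ⟨hx0, hy0, hxy, hsum⟩ := hcond
          simp only [Finset.mem_image] at hmem
          obtain ⟨t, ht, hl⟩ := hmem
          rw [ih m (by omega) _ t] at ht
          obtain ⟨⟨htp, hts⟩, hta, htl⟩ := ht
          subst hl
          refine ⟨⟨?_, ?_⟩, ?_, by simp [htl]⟩
          · intro z hz
            simp at hz
            rcases hz with h | h | h
            · omega
            · exact htp z h
            · omega
          · simp [hts]; omega
          · rw [isAntiPal_cons_concat]; exact ⟨hxy, hta⟩
        · simp at hmem
      · rintro ⟨⟨hp, hs⟩, ha, hl⟩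
        match l with
        | x :: t' =>
          have ht' : t' ≠ [] := by
            intro h; subst h; simp at hl
          obtain ⟨t, y, hty⟩ := List.eq_nil_or_concat t' |>.resolve_left ht'
          subst hty
          simp only [List.concat_eq_append] at hp hs ha hl ⊢
          have hx0 : 0 < x := hp x (by simp)
          have hy0 : 0 < y := hp y (by simp)
          have hsum : x + y + t.sum = n := by simp at hs; omega
          rw [isAntiPal_cons_concat] at ha
          refine ⟨(x, y), ⟨by omega, by omega⟩, ?_⟩
          rw [if_pos ⟨hx0, hy0, ha.1, by omega⟩]
          simp only [Finset.mem_image]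
          refine ⟨t, ?_, rfl⟩
          rw [ih m (by omega) _ t]
          refine ⟨⟨fun z hz => hp z (by simp [hz]), by omega⟩, ha.2, by simp at hl; omega⟩

/-! ### Cardinality recursion -/

lemma card_apFinset (m : ℕ) : ∀ n : ℕ,
    (apFinset n m).card = 2 ^ (m / 2) * (arndtFinset n m).card := by
  induction m using Nat.strong_induction_on with
  | _ m ih =>
    intro n
    match m with
    | 0 => simp [apFinset, arndtFinset]
    | 1 => simp [apFinset, arndtFinset]
    | m+2 =>
      have hdiv : (m+2) / 2 = m / 2 + 1 := by omega
      rw [hdiv]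
      simp only [apFinset, arndtFinset]
      rw [Finset.card_biUnion, Finset.card_biUnion]
      · simp only [apply_ite Finset.card, Finset.card_empty]
        have hAP : ∀ p ∈ (Finset.range (n+1)) ×ˢ (Finset.range (n+1)),
            (if 0 < p.1 ∧ 0 < p.2 ∧ p.1 ≠ p.2 ∧ p.1 + p.2 ≤ n then
              ((apFinset (n - p.1 - p.2) m).image (fun t => p.1 :: (t ++ [p.2]))).card
             else 0)
            = (if 0 < p.2 ∧ p.2 < p.1 ∧ p.1 + p.2 ≤ n then
                2 ^ (m/2) * (arndtFinset (n - p.1 - p.2) m).card else 0)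
              + (if 0 < p.1 ∧ p.1 < p.2 ∧ p.2 + p.1 ≤ n then
                2 ^ (m/2) * (arndtFinset (n - p.2 - p.1) m).card else 0) := by
          intro p _
          obtain ⟨x, y⟩ := p
          simp only
          have hinj : Function.Injective (fun t : List ℕ => x :: (t ++ [y])) := by
            intro a b hab
            simpa using hab
          have e : n - y - x = n - x - y := by omega
          rw [e]
          by_cases h1 : 0 < x ∧ 0 < y ∧ x ≠ y ∧ x + y ≤ n
          · rw [if_pos h1, Finset.card_image_of_injective _ hinj, ih m (by omega)]
            by_cases h2 : 0 < y ∧ y < x ∧ x + y ≤ n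
            · rw [if_pos h2, if_neg (by omega)]; ring
            · rw [if_neg h2, if_pos (by omega)]; ring
          · rw [if_neg h1, if_neg (by omega), if_neg (by omega)]
        rw [Finset.sum_congr rfl hAP, Finset.sum_add_distrib]
        have hswap : ∑ p ∈ (Finset.range (n+1)) ×ˢ (Finset.range (n+1)),
            (if 0 < p.1 ∧ p.1 < p.2 ∧ p.2 + p.1 ≤ n then
              2 ^ (m/2) * (arndtFinset (n - p.2 - p.1) m).card else 0)
            = ∑ p ∈ (Finset.range (n+1)) ×ˢ (Finset.range (n+1)),
            (if 0 < p.2 ∧ p.2 < p.1 ∧ p.1 + p.2 ≤ n then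
              2 ^ (m/2) * (arndtFinset (n - p.1 - p.2) m).card else 0) := by
          refine Finset.sum_nbij' (fun p => p.swap) (fun p => p.swap) ?_ ?_ ?_ ?_ ?_
          · intro a ha
            simp only [Finset.mem_product, Finset.mem_range] at ha ⊢
            exact ⟨ha.2, ha.1⟩
          · intro a ha
            simp only [Finset.mem_product, Finset.mem_range] at ha ⊢
            exact ⟨ha.2, ha.1⟩
          · intro a _; simp
          · intro a _; simp
          · intro a _; rfl
        rw [hswap]
        have hA : ∀ p ∈ (Finset.range (n+1)) ×ˢ (Finset.range (n+1)),
            (if 0 < p.2 ∧ p.2 < p.1 ∧ p.1 + p.2 ≤ n then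
              ((arndtFinset (n - p.1 - p.2) m).image (fun t => p.1 :: p.2 :: t)).card
             else 0)
            = (if 0 < p.2 ∧ p.2 < p.1 ∧ p.1 + p.2 ≤ n then
              (arndtFinset (n - p.1 - p.2) m).card else 0) := by
          intro p _
          obtain ⟨x, y⟩ := p
          simp only
          split_ifs with h
          · exact Finset.card_image_of_injective _ (fun a b hab => by simpa using hab)
          · simp
        rw [Finset.sum_congr rfl hA]
        have hc : ∑ p ∈ (Finset.range (n+1)) ×ˢ (Finset.range (n+1)),
            (if 0 < p.2 ∧ p.2 < p.1 ∧ p.1 + p.2 ≤ n then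
              2 ^ (m/2) * (arndtFinset (n - p.1 - p.2) m).card else 0)
            = 2 ^ (m/2) * ∑ p ∈ (Finset.range (n+1)) ×ˢ (Finset.range (n+1)),
            (if 0 < p.2 ∧ p.2 < p.1 ∧ p.1 + p.2 ≤ n then
              (arndtFinset (n - p.1 - p.2) m).card else 0) := by
          rw [Finset.mul_sum]
          refine Finset.sum_congr rfl fun p _ => ?_
          split_ifs <;> simp
        rw [hc, pow_succ]
        ring
      · -- disjointness for arndt
        intro p hp q hq hpq
        simp only [Function.onFun]
        split_ifs with h1 h2 h2
        · refine Finset.disjoint_left.mpr ?_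
          intro l hl hm
          simp only [Finset.mem_image] at hl hm
          obtain ⟨a, _, ha⟩ := hl
          obtain ⟨b, _, hb⟩ := hm
          rw [← hb] at ha
          simp only [List.cons.injEq] at ha
          exact hpq (Prod.ext ha.1 ha.2.1)
        all_goals simp
      · -- disjointness for ap
        intro p hp q hq hpq
        simp only [Function.onFun]
        split_ifs with h1 h2 h2
        · refine Finset.disjoint_left.mpr ?_
          intro l hl hm
          simp only [Finset.mem_image] at hl hm
          obtain ⟨a, haa, ha⟩ := hl
          obtain ⟨b, hbb, hb⟩ := hm
          rw [← hb] at ha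
          simp only [List.cons.injEq] at ha
          have h2' : p.2 = q.2 := by
            have := congrArg List.getLast? ha.2
            simpa using this
          exact hpq (Prod.ext ha.1 h2')
        all_goals simp


/-- for all `n, m ≥ 0`, `ap(n,m) = 2^{⌊m/2⌋} · a(n,m)`; equivalently the number
of Arndt compositions of `n` with `m` parts equals the number of reduced anti-palindromic
compositions of `n` with `m` parts. -/
theorem antiPalParts_eq_two_pow_mul_arndtParts (n m : ℕ) :
    antiPalParts n m = 2 ^ (m / 2) * arndtParts n m := by
  have h1 : {l : List ℕ | IsComposition n l ∧ IsAntiPalindromic l ∧ l.length = m}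
      = ↑(apFinset n m) := by
    ext l; simp [mem_apFinset]
  have h2 : {l : List ℕ | IsComposition n l ∧ IsArndt l ∧ l.length = m}
      = ↑(arndtFinset n m) := by
    ext l; simp [mem_arndtFinset]
  rw [antiPalParts, arndtParts, h1, h2, Set.ncard_coe_finset, Set.ncard_coe_finset]
  exact card_apFinset m n
end

section
/- The bivariate formal power series B(x,y) = Σ_{n,m ≥ 0} b(n,m) xⁿ yᵐ over ℤ satisfies (1 - x - x²)(1 - xy)(1 - x²y) · B(x,y) = 1 - x - x² - x²y + 2x³y + 2x⁴y - x⁵y - x⁴y². -/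
/-- `arndtLast n m` is the number of Arndt compositions of `n` whose last part equals `m`
(the last part of the empty composition is taken to be `0`). -/
noncomputable def arndtLast (n m : ℕ) : ℕ :=
  Set.ncard {l : List ℕ | IsComposition n l ∧ IsArndt l ∧ l.getLastD 0 = m}

/-- The bivariate generating function `B(x,y) = Σ_{n,m≥0} b(n,m) xⁿ yᵐ`,
with `x = X 0` and `y = X 1`. -/
noncomputable def arndtLastGF : MvPowerSeries (Fin 2) ℤ :=
  fun d => (arndtLast (d 0) (d 1) : ℤ)

lemma arndt_append_single {l : List ℕ} (h : Even l.length) (m : ℕ) :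
    IsArndt (l ++ [m]) ↔ IsArndt l := by
  obtain ⟨t, ht⟩ := h
  constructor
  · intro H i hi
    have h1 : 2 * i + 1 < (l ++ [m]).length := by simp; omega
    have := H i h1
    rwa [List.getD_append _ _ _ _ (by omega), List.getD_append _ _ _ _ (by omega)] at this
  · intro H i hi
    simp only [List.length_append, List.length_singleton] at hi
    have hlt : 2 * i + 1 < l.length := by omega
    rw [List.getD_append _ _ _ _ (by omega), List.getD_append _ _ _ _ (by omega)]
    exact H i hlt

lemma arndt_append_pair {l : List ℕ} (h : Even l.length) (a b : ℕ) :
    IsArndt (l ++ [a, b]) ↔ (IsArndt l ∧ b < a) := by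
  obtain ⟨t, ht⟩ := h
  constructor
  · intro H
    constructor
    · intro i hi
      have h1 : 2 * i + 1 < (l ++ [a, b]).length := by simp; omega
      have := H i h1
      rwa [List.getD_append _ _ _ _ (by omega), List.getD_append _ _ _ _ (by omega)] at this
    · have h1 : 2 * t + 1 < (l ++ [a, b]).length := by simp; omega
      have := H t h1
      rw [List.getD_append_right _ _ _ _ (by omega),
        List.getD_append_right _ _ _ _ (by omega)] at this
      have e1 : 2 * t + 1 - l.length = 1 := by omega
      have e2 : 2 * t - l.length = 0 := by omega
      rw [e1, e2] at this
      simpa using this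
  · rintro ⟨H, hba⟩ i hi
    simp only [List.length_append] at hi
    rcases lt_or_ge (2 * i + 1) l.length with hlt | hge
    · rw [List.getD_append _ _ _ _ (by omega), List.getD_append _ _ _ _ (by omega)]
      exact H i hlt
    · have hit : i = t := by
        simp only [List.length_cons, List.length_nil] at hi
        omega
      subst hit
      rw [List.getD_append_right _ _ _ _ (by omega), List.getD_append_right _ _ _ _ (by omega)]
      have e1 : 2 * i + 1 - l.length = 1 := by omega
      have e2 : 2 * i - l.length = 0 := by omega
      rw [e1, e2]
      simpa using hba

lemma comp_finite (n : ℕ) (P : List ℕ → Prop) :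
    {l : List ℕ | IsComposition n l ∧ P l}.Finite := by
  apply Set.Finite.subset (Set.finite_range (fun c : Composition n => c.blocks))
  rintro l ⟨⟨h1, h2⟩, -⟩
  exact ⟨⟨l, fun hi => h1 _ hi, h2⟩, rfl⟩

lemma even_decomp {l : List ℕ} (hl : l ≠ []) (he : Even l.length) :
    ∃ l₂ a b, l = l₂ ++ [a, b] ∧ Even l₂.length := by
  obtain ⟨l₁, b, rfl⟩ : ∃ l₁ b, l = l₁ ++ [b] :=
    ⟨l.dropLast, l.getLast hl, (List.dropLast_append_getLast hl).symm⟩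
  have hl₁ : l₁ ≠ [] := by
    rintro rfl
    simp [Nat.even_iff] at he
  obtain ⟨l₂, a, rfl⟩ : ∃ l₂ a, l₁ = l₂ ++ [a] :=
    ⟨l₁.dropLast, l₁.getLast hl₁, (List.dropLast_append_getLast hl₁).symm⟩
  refine ⟨l₂, a, b, by simp, ?_⟩
  simp [List.length_append, Nat.even_add, Nat.even_iff] at he ⊢
  omega

def AevSet (k : ℕ) : Set (List ℕ) :=
  {l : List ℕ | IsComposition k l ∧ (IsArndt l ∧ Even l.length)}

lemma AevSet_finite (k : ℕ) : (AevSet k).Finite := comp_finite k _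

noncomputable def Aev (k : ℕ) : ℕ := (AevSet k).ncard

lemma Aev_zero : Aev 0 = 1 := by
  have h : AevSet 0 = {([] : List ℕ)} := by
    ext l
    constructor
    · rintro ⟨⟨h1, h2⟩, -, -⟩
      cases l with
      | nil => rfl
      | cons a t =>
        exfalso
        have := h1 a (by simp)
        simp only [List.sum_cons] at h2
        omega
    · rintro rfl
      exact ⟨⟨by simp, by simp⟩, fun i hi => by simp at hi, by simp⟩
  rw [Aev, h, Set.ncard_singleton]

lemma count_odd (n m : ℕ) (hm : 1 ≤ m) (hmn : m ≤ n) :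
    {l : List ℕ | IsComposition n l ∧ IsArndt l ∧ l.getLastD 0 = m ∧ Odd l.length}.ncard
      = Aev (n - m) := by
  have himg : {l : List ℕ | IsComposition n l ∧ IsArndt l ∧ l.getLastD 0 = m ∧ Odd l.length}
      = (fun l => l ++ [m]) '' AevSet (n - m) := by
    ext l
    constructor
    · rintro ⟨⟨h1, h2⟩, hA, hlast, hodd⟩
      have hl : l ≠ [] := by
        rintro rfl
        simp at hlast
        omega
      obtain ⟨l', c, rfl⟩ : ∃ l' c, l = l' ++ [c] :=
        ⟨l.dropLast, l.getLast hl, (List.dropLast_append_getLast hl).symm⟩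
      have hc : m = c := by rw [List.getLastD_concat] at hlast; omega
      obtain rfl := hc
      have heven : Even l'.length := by
        obtain ⟨t, ht⟩ := hodd
        simp only [List.length_append, List.length_singleton] at ht
        exact ⟨t, by omega⟩
      refine ⟨l', ⟨⟨fun x hx => h1 x (by simp [hx]), ?_⟩, ?_, heven⟩, rfl⟩
      · have := h2
        simp only [List.sum_append, List.sum_cons, List.sum_nil] at this
        omega
      · exact (arndt_append_single heven m).mp hA
    · rintro ⟨l', ⟨⟨h1, h2⟩, hA, he⟩, rfl⟩
      refine ⟨⟨?_, ?_⟩, ?_, ?_, ?_⟩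
      · intro x hx
        rcases List.mem_append.mp hx with h | h
        · exact h1 x h
        · simp at h; omega
      · simp only [List.sum_append, List.sum_cons, List.sum_nil]
        omega
      · exact (arndt_append_single he m).mpr hA
      · exact List.getLastD_concat
      · simpa [Nat.odd_add_one, Nat.not_odd_iff_even] using he
  rw [himg, Set.ncard_image_of_injective _ (fun a b h => List.append_inj' h rfl |>.1)]
  rfl

lemma count_even (n m : ℕ) (hm : 1 ≤ m) :
    {l : List ℕ | IsComposition n l ∧ IsArndt l ∧ l.getLastD 0 = m ∧ Even l.length}.ncard
      = ∑ a ∈ Finset.Ioc m (n - m), Aev (n - m - a) := by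
  classical
  have hfin : {l : List ℕ | IsComposition n l ∧ IsArndt l ∧ l.getLastD 0 = m ∧
      Even l.length}.Finite := by
    have := comp_finite n (fun l => IsArndt l ∧ l.getLastD 0 = m ∧ Even l.length)
    convert this using 1
  rw [Set.ncard_eq_toFinset_card _ hfin]
  have hAe : ∀ a, Aev (n - m - a) = ((AevSet_finite (n - m - a)).toFinset).card :=
    fun a => Set.ncard_eq_toFinset_card _ _
  simp_rw [hAe]
  rw [← Finset.card_sigma]
  symm
  apply Finset.card_bij (fun (x : Σ _ : ℕ, List ℕ) _ => x.2 ++ [x.1, m])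
  · rintro ⟨a, l'⟩ hx
    show l' ++ [a, m] ∈ hfin.toFinset
    rw [Finset.mem_sigma] at hx
    obtain ⟨ha, hl'⟩ := hx
    have hl'' : l' ∈ (AevSet_finite (n - m - a)).toFinset := hl'
    rw [Set.Finite.mem_toFinset] at hl''
    obtain ⟨⟨h1, h2⟩, hA, he⟩ := hl''
    rw [Finset.mem_Ioc] at ha
    have ha' : m < a ∧ a ≤ n - m := ha
    clear ha
    rw [Set.Finite.mem_toFinset]
    refine ⟨⟨?_, ?_⟩, ?_, ?_, ?_⟩
    · intro x hx
      rcases List.mem_append.mp hx with h | h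
      · exact h1 x h
      · simp at h; rcases h with h | h <;> omega

    · simp only [List.sum_append, List.sum_cons, List.sum_nil]
      omega
    · exact (arndt_append_pair he a m).mpr ⟨hA, ha'.1⟩
    · rw [show l' ++ [a, m] = (l' ++ [a]) ++ [m] by simp]
      exact List.getLastD_concat
    · simpa [Nat.even_add] using he
  · rintro ⟨a, l'⟩ hx ⟨b, l''⟩ hy h
    dsimp only at h
    obtain ⟨h1, h2⟩ := List.append_inj' h rfl
    simp only [List.cons.injEq] at h2
    obtain ⟨rfl, -⟩ := h2
    obtain rfl := h1
    rfl
  · intro l hl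
    rw [Set.Finite.mem_toFinset] at hl
    obtain ⟨⟨h1, h2⟩, hA, hlast, he⟩ := hl
    have hl0 : l ≠ [] := by
      rintro rfl
      simp at hlast
      omega
    obtain ⟨l₂, a, b, rfl, he₂⟩ := even_decomp hl0 he
    have hb : m = b := by
      rw [show l₂ ++ [a, b] = (l₂ ++ [a]) ++ [b] by simp, List.getLastD_concat] at hlast
      omega
    obtain rfl := hb
    obtain ⟨hA₂, hma⟩ := (arndt_append_pair he₂ a m).mp hA
    have hsum : l₂.sum + a + m = n := by
      simp only [List.sum_append, List.sum_cons, List.sum_nil] at h2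
      omega
    refine ⟨⟨a, l₂⟩, ?_, rfl⟩
    rw [Finset.mem_sigma]
    constructor
    · rw [Finset.mem_Ioc]
      refine ⟨hma, ?_⟩
      show a ≤ n - m
      omega
    · show l₂ ∈ (AevSet_finite (n - m - a)).toFinset
      rw [Set.Finite.mem_toFinset]
      exact ⟨⟨fun x hx => h1 x (by simp [hx]), by omega⟩, hA₂, he₂⟩

def pairsF (k : ℕ) : Finset (ℕ × ℕ) :=
  (Finset.range (k + 1) ×ˢ Finset.range (k + 1)).filter
    (fun p => 0 < p.2 ∧ p.2 < p.1 ∧ p.1 + p.2 ≤ k)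

lemma Aev_rec (k : ℕ) (hk : 1 ≤ k) :
    Aev k = ∑ p ∈ pairsF k, Aev (k - p.1 - p.2) := by
  classical
  rw [Aev, Set.ncard_eq_toFinset_card _ (AevSet_finite k)]
  have hAe : ∀ j, Aev j = ((AevSet_finite j).toFinset).card :=
    fun j => Set.ncard_eq_toFinset_card _ _
  simp_rw [hAe]
  rw [← Finset.card_sigma]
  symm
  apply Finset.card_bij (fun (x : Σ _ : ℕ × ℕ, List ℕ) _ => x.2 ++ [x.1.1, x.1.2])
  · rintro ⟨⟨a, b⟩, l'⟩ hx
    show l' ++ [a, b] ∈ (AevSet_finite k).toFinset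
    rw [Finset.mem_sigma] at hx
    obtain ⟨hp, hl'⟩ := hx
    have hl'' : l' ∈ (AevSet_finite (k - a - b)).toFinset := hl'
    rw [Set.Finite.mem_toFinset] at hl''
    obtain ⟨⟨h1, h2⟩, hA, he⟩ := hl''
    have hp'' : (a, b) ∈ pairsF k := hp
    rw [pairsF, Finset.mem_filter] at hp''
    have hp' : 0 < b ∧ b < a ∧ a + b ≤ k := hp''.2
    rw [Set.Finite.mem_toFinset]
    refine ⟨⟨?_, ?_⟩, ?_, ?_⟩
    · intro x hx
      rcases List.mem_append.mp hx with h | h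
      · exact h1 x h
      · simp at h; rcases h with h | h <;> omega
    · simp only [List.sum_append, List.sum_cons, List.sum_nil]
      omega
    · exact (arndt_append_pair he a b).mpr ⟨hA, hp'.2.1⟩
    · simpa [Nat.even_add] using he
  · rintro ⟨⟨a, b⟩, l'⟩ hx ⟨⟨a', b'⟩, l''⟩ hy h
    dsimp only at h
    obtain ⟨h1, h2⟩ := List.append_inj' h rfl
    simp only [List.cons.injEq] at h2
    obtain ⟨rfl, rfl, -⟩ := h2
    obtain rfl := h1
    rfl
  · intro l hl
    rw [Set.Finite.mem_toFinset] at hl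
    obtain ⟨⟨h1, h2⟩, hA, he⟩ := hl
    have hl0 : l ≠ [] := by
      rintro rfl
      simp only [List.sum_nil] at h2
      omega
    obtain ⟨l₂, a, b, rfl, he₂⟩ := even_decomp hl0 he
    obtain ⟨hA₂, hba⟩ := (arndt_append_pair he₂ a b).mp hA
    have hsum : l₂.sum + a + b = k := by
      simp only [List.sum_append, List.sum_cons, List.sum_nil] at h2
      omega
    have hbpos : 0 < b := h1 b (by simp)
    refine ⟨⟨(a, b), l₂⟩, ?_, rfl⟩
    rw [Finset.mem_sigma]
    constructor
    · show (a, b) ∈ pairsF k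
      rw [pairsF, Finset.mem_filter, Finset.mem_product, Finset.mem_range, Finset.mem_range]
      exact ⟨⟨by omega, by omega⟩, hbpos, hba, by omega⟩
    · show l₂ ∈ (AevSet_finite (k - a - b)).toFinset
      rw [Set.Finite.mem_toFinset]
      exact ⟨⟨fun x hx => h1 x (by simp [hx]), by omega⟩, hA₂, he₂⟩

lemma card_fiber (k s : ℕ) (hs : s ≤ k) :
    ((pairsF k).filter (fun p => p.1 + p.2 = s)).card = (s - 1) / 2 := by
  classical
  have himg : (pairsF k).filter (fun p => p.1 + p.2 = s)
      = (Finset.Icc 1 ((s - 1) / 2)).image (fun b => (s - b, b)) := by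
    ext ⟨a, b⟩
    rw [Finset.mem_filter, Finset.mem_image, pairsF, Finset.mem_filter, Finset.mem_product,
      Finset.mem_range, Finset.mem_range]
    constructor
    · rintro ⟨⟨⟨-, -⟩, hb, hba, -⟩, hab⟩
      have hab' : a + b = s := hab
      have hb' : 0 < b := hb
      have hba' : b < a := hba
      refine ⟨b, Finset.mem_Icc.mpr ⟨hb', ?_⟩, ?_⟩
      · omega
      · simp only [Prod.mk.injEq]
        exact ⟨by omega, trivial⟩
    · rintro ⟨c, hc, hcb⟩
      rw [Finset.mem_Icc] at hc
      simp only [Prod.mk.injEq] at hcb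
      obtain ⟨rfl, rfl⟩ := hcb
      refine ⟨⟨⟨by omega, by omega⟩, by omega, by omega, by omega⟩, by omega⟩
  rw [himg, Finset.card_image_of_injective _ (fun b b' h => by
    simpa using congrArg Prod.snd h), Nat.card_Icc]
  omega

lemma Aev_rec' (k : ℕ) (hk : 1 ≤ k) :
    Aev k = ∑ s ∈ Finset.range (k + 1), (s - 1) / 2 * Aev (k - s) := by
  classical
  rw [Aev_rec k hk]
  rw [← Finset.sum_fiberwise_of_maps_to (g := fun p : ℕ × ℕ => p.1 + p.2) (t := Finset.range (k+1))
    (fun p hp => by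
      rw [pairsF, Finset.mem_filter] at hp
      have hp' : 0 < p.2 ∧ p.2 < p.1 ∧ p.1 + p.2 ≤ k := hp.2
      rw [Finset.mem_range]
      show p.1 + p.2 < k + 1
      omega)]
  apply Finset.sum_congr rfl
  intro s hs
  rw [Finset.mem_range] at hs
  have : ∀ p ∈ (pairsF k).filter (fun p => p.1 + p.2 = s),
      Aev (k - p.1 - p.2) = Aev (k - s) := by
    rintro ⟨a, b⟩ hp
    rw [Finset.mem_filter] at hp
    have : a + b = s := hp.2
    congr 1
    omega
  rw [Finset.sum_congr rfl this, Finset.sum_const, card_fiber k s (by omega), smul_eq_mul]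

lemma arndtLast_zero (n : ℕ) : arndtLast n 0 = if n = 0 then 1 else 0 := by
  rcases Nat.eq_zero_or_pos n with rfl | hn
  · rw [if_pos rfl, arndtLast]
    have h : {l : List ℕ | IsComposition 0 l ∧ IsArndt l ∧ l.getLastD 0 = 0}
        = {([] : List ℕ)} := by
      ext l
      constructor
      · rintro ⟨⟨h1, h2⟩, -, -⟩
        cases l with
        | nil => rfl
        | cons a t =>
          exfalso
          have := h1 a (by simp)
          simp only [List.sum_cons] at h2
          omega
      · rintro rfl
        exact ⟨⟨by simp, by simp⟩, fun i hi => by simp at hi, by simp⟩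
    rw [h, Set.ncard_singleton]
  · rw [if_neg (by omega), arndtLast]
    have h : {l : List ℕ | IsComposition n l ∧ IsArndt l ∧ l.getLastD 0 = 0} = ∅ := by
      ext l
      simp only [Set.mem_setOf_eq, Set.mem_empty_iff_false, iff_false]
      rintro ⟨⟨h1, h2⟩, -, hlast⟩
      have hl0 : l ≠ [] := by
        rintro rfl
        simp only [List.sum_nil] at h2
        omega
      obtain ⟨l', c, rfl⟩ : ∃ l' c, l = l' ++ [c] :=
        ⟨l.dropLast, l.getLast hl0, (List.dropLast_append_getLast hl0).symm⟩
      rw [List.getLastD_concat] at hlast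
      have := h1 c (by simp)
      omega
    rw [h, Set.ncard_empty]

lemma arndtLast_formula (n m : ℕ) (hm : 1 ≤ m) :
    (arndtLast n m : ℤ) = (if m ≤ n then (Aev (n - m) : ℤ) else 0)
      + ∑ k ∈ Finset.range (n - 2 * m), (Aev k : ℤ) := by
  rcases le_or_gt m n with hmn | hmn
  · rw [arndtLast]
    have hsplit : {l : List ℕ | IsComposition n l ∧ IsArndt l ∧ l.getLastD 0 = m}
        = {l : List ℕ | IsComposition n l ∧ IsArndt l ∧ l.getLastD 0 = m ∧ Odd l.length}
          ∪ {l : List ℕ | IsComposition n l ∧ IsArndt l ∧ l.getLastD 0 = m ∧ Even l.length} := by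
      ext l
      simp only [Set.mem_setOf_eq, Set.mem_union]
      constructor
      · rintro ⟨hc, hA, hlast⟩
        rcases Nat.even_or_odd l.length with h | h
        · exact Or.inr ⟨hc, hA, hlast, h⟩
        · exact Or.inl ⟨hc, hA, hlast, h⟩
      · rintro (⟨hc, hA, hlast, -⟩ | ⟨hc, hA, hlast, -⟩) <;> exact ⟨hc, hA, hlast⟩
    have hdisj : Disjoint
        {l : List ℕ | IsComposition n l ∧ IsArndt l ∧ l.getLastD 0 = m ∧ Odd l.length}
        {l : List ℕ | IsComposition n l ∧ IsArndt l ∧ l.getLastD 0 = m ∧ Even l.length} := by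
      rw [Set.disjoint_left]
      rintro l ⟨-, -, -, hodd⟩ ⟨-, -, -, heven⟩
      exact (Nat.not_even_iff_odd.mpr hodd) heven
    have hf1 := comp_finite n (fun l => IsArndt l ∧ l.getLastD 0 = m ∧ Odd l.length)
    have hf2 := comp_finite n (fun l => IsArndt l ∧ l.getLastD 0 = m ∧ Even l.length)
    rw [hsplit, Set.ncard_union_eq hdisj hf1 hf2, count_odd n m hm hmn, count_even n m hm]
    rw [if_pos hmn]
    push_cast
    congr 1
    apply Finset.sum_nbij' (i := fun a => n - m - a) (j := fun k => n - m - k)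
    · intro a ha
      rw [Finset.mem_Ioc] at ha
      rw [Finset.mem_range]
      omega
    · intro k hk
      rw [Finset.mem_range] at hk
      rw [Finset.mem_Ioc]
      omega
    · intro a ha
      rw [Finset.mem_Ioc] at ha
      omega
    · intro k hk
      rw [Finset.mem_range] at hk
      omega
    · intro a ha
      rfl
  · have hempty : {l : List ℕ | IsComposition n l ∧ IsArndt l ∧ l.getLastD 0 = m} = ∅ := by
      ext l
      simp only [Set.mem_setOf_eq, Set.mem_empty_iff_false, iff_false]
      rintro ⟨⟨h1, h2⟩, -, hlast⟩
      have hl0 : l ≠ [] := by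
        rintro rfl
        simp at hlast
        omega
      obtain ⟨l', c, rfl⟩ : ∃ l' c, l = l' ++ [c] :=
        ⟨l.dropLast, l.getLast hl0, (List.dropLast_append_getLast hl0).symm⟩
      rw [List.getLastD_concat] at hlast
      simp only [List.sum_append, List.sum_cons, List.sum_nil] at h2
      omega
    rw [arndtLast, hempty, Set.ncard_empty, if_neg (by omega)]
    have : n - 2 * m = 0 := by omega
    rw [this]
    simp

noncomputable def Aseries : PowerSeries ℤ := PowerSeries.mk fun k => (Aev k : ℤ)
def cseq (s : ℕ) : ℤ := (((s - 1) / 2 : ℕ) : ℤ)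
noncomputable def Cseries : PowerSeries ℤ := PowerSeries.mk cseq

lemma E2 : Aseries = 1 + Cseries * Aseries := by
  ext k
  rw [map_add, PowerSeries.coeff_mul, Finset.Nat.sum_antidiagonal_eq_sum_range_succ_mk]
  simp only [Aseries, Cseries, PowerSeries.coeff_mk, cseq]
  rcases Nat.eq_zero_or_pos k with rfl | hk
  · simp [Aev_zero]
  · rw [PowerSeries.coeff_one, if_neg (by omega), Aev_rec' k hk]
    push_cast
    simp

lemma E3 : (1 - PowerSeries.X - PowerSeries.X ^ 2 + PowerSeries.X ^ 3) * Cseries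
    = (PowerSeries.X : PowerSeries ℤ) ^ 3 := by
  have hexp : (1 - PowerSeries.X - PowerSeries.X ^ 2 + PowerSeries.X ^ 3) * Cseries
      = Cseries - PowerSeries.X ^ 1 * Cseries - PowerSeries.X ^ 2 * Cseries
        + PowerSeries.X ^ 3 * Cseries := by ring
  rw [hexp]
  ext k
  rw [map_add, map_sub, map_sub, PowerSeries.coeff_X_pow_mul', PowerSeries.coeff_X_pow_mul',
    PowerSeries.coeff_X_pow_mul', PowerSeries.coeff_X_pow]
  simp only [Cseries, PowerSeries.coeff_mk, cseq]
  split_ifs <;> push_cast <;> omega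

lemma Afib_series : (1 - PowerSeries.X - PowerSeries.X ^ 2) * Aseries
    = 1 - PowerSeries.X - PowerSeries.X ^ 2 + PowerSeries.X ^ 3 := by
  have h2 := E2
  have h3 := E3
  linear_combination (1 - PowerSeries.X - PowerSeries.X ^ 2 + PowerSeries.X ^ 3) * h2
    + Aseries * h3

lemma Aev_coeff (k : ℕ) :
    (Aev k : ℤ) - (if 1 ≤ k then (Aev (k - 1) : ℤ) else 0)
        - (if 2 ≤ k then (Aev (k - 2) : ℤ) else 0)
      = (if k = 0 then 1 else 0) - (if k = 1 then 1 else 0) - (if k = 2 then 1 else 0)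
        + (if k = 3 then 1 else 0) := by
  have h := congrArg (PowerSeries.coeff k) Afib_series
  have hexp : (1 - PowerSeries.X - PowerSeries.X ^ 2) * Aseries
      = Aseries - PowerSeries.X ^ 1 * Aseries - PowerSeries.X ^ 2 * Aseries := by ring
  rw [hexp] at h
  rw [map_sub, map_sub, PowerSeries.coeff_X_pow_mul', PowerSeries.coeff_X_pow_mul'] at h
  rw [map_add, map_sub, map_sub, PowerSeries.coeff_one, PowerSeries.coeff_X,
    PowerSeries.coeff_X_pow, PowerSeries.coeff_X_pow] at h
  simp only [Aseries, PowerSeries.coeff_mk] at h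
  rw [h]

open MvPowerSeries

noncomputable def Amv : MvPowerSeries (Fin 2) ℤ :=
  fun d => if d 1 = 0 then (Aev (d 0) : ℤ) else 0
noncomputable def Umv : MvPowerSeries (Fin 2) ℤ :=
  fun d => if d 1 = 0 then ∑ k ∈ Finset.range (d 0 + 1), (Aev k : ℤ) else 0
noncomputable def Vone : MvPowerSeries (Fin 2) ℤ :=
  fun d => if 1 ≤ d 1 ∧ d 1 ≤ d 0 then (Aev (d 0 - d 1) : ℤ) else 0
noncomputable def Vtwo : MvPowerSeries (Fin 2) ℤ :=
  fun d => if 1 ≤ d 1 then ∑ k ∈ Finset.range (d 0 - 2 * d 1), (Aev k : ℤ) else 0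

lemma shift_apply0 (d : Fin 2 →₀ ℕ) (a b : ℕ) :
    ((d - (Finsupp.single 0 a + Finsupp.single 1 b) : Fin 2 →₀ ℕ)) 0 = d 0 - a := by
  rw [Finsupp.tsub_apply, Finsupp.add_apply, Finsupp.single_eq_same,
    Finsupp.single_eq_of_ne (by decide), add_zero]

lemma shift_apply1 (d : Fin 2 →₀ ℕ) (a b : ℕ) :
    ((d - (Finsupp.single 0 a + Finsupp.single 1 b) : Fin 2 →₀ ℕ)) 1 = d 1 - b := by
  rw [Finsupp.tsub_apply, Finsupp.add_apply, Finsupp.single_eq_same,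
    Finsupp.single_eq_of_ne (by decide), zero_add]

lemma coeff_shift (a b : ℕ) (f : MvPowerSeries (Fin 2) ℤ) (d : Fin 2 →₀ ℕ) :
    MvPowerSeries.coeff d (MvPowerSeries.X 0 ^ a * MvPowerSeries.X 1 ^ b * f)
      = if a ≤ d 0 ∧ b ≤ d 1
          then MvPowerSeries.coeff (d - (Finsupp.single 0 a + Finsupp.single 1 b)) f
          else 0 := by
  rw [show (MvPowerSeries.X 0 ^ a * MvPowerSeries.X 1 ^ b : MvPowerSeries (Fin 2) ℤ)
      = MvPowerSeries.monomial (Finsupp.single 0 a + Finsupp.single 1 b) 1 by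
    rw [MvPowerSeries.X_pow_eq, MvPowerSeries.X_pow_eq, MvPowerSeries.monomial_mul_monomial,
      one_mul]]
  rw [MvPowerSeries.coeff_monomial_mul]
  simp only [one_mul]
  apply if_congr _ rfl rfl
  rw [Finsupp.le_def, Fin.forall_fin_two, Finsupp.add_apply, Finsupp.add_apply,
    Finsupp.single_eq_same, Finsupp.single_eq_same, Finsupp.single_eq_of_ne (by decide),
    Finsupp.single_eq_of_ne (by decide), add_zero, zero_add]

lemma finsupp_eq_zero_iff (e : Fin 2 →₀ ℕ) : e = 0 ↔ e 0 = 0 ∧ e 1 = 0 := by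
  constructor
  · rintro rfl; simp
  · rintro ⟨h0, h1⟩
    ext i
    match i with
    | 0 => simpa using h0
    | 1 => simpa using h1

lemma M1 : (1 - MvPowerSeries.X 0 ^ 1 * MvPowerSeries.X 1 ^ 1) * Vone
    = MvPowerSeries.X 0 ^ 1 * MvPowerSeries.X 1 ^ 1 * Amv := by
  have hexp : (1 - MvPowerSeries.X 0 ^ 1 * MvPowerSeries.X 1 ^ 1) * Vone
      = Vone - MvPowerSeries.X 0 ^ 1 * MvPowerSeries.X 1 ^ 1 * Vone := by ring
  rw [hexp]
  ext d
  rw [map_sub, coeff_shift, coeff_shift]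
  simp only [MvPowerSeries.coeff_apply, Vone, Amv, shift_apply0, shift_apply1]
  set n := d 0 with hn0
  set m := d 1 with hm0
  rcases Nat.eq_zero_or_pos m with hm | hm
  · simp [hm]
  rcases Nat.lt_or_ge n m with hnm | hnm
  · rw [if_neg (by omega)]
    split_ifs <;> omega
  by_cases h2 : m = 1
  · have e1 : (1 ≤ m ∧ m ≤ n) := ⟨hm, hnm⟩
    have e2 : (1 ≤ n ∧ 1 ≤ m) := ⟨by omega, hm⟩
    rw [if_pos e1, if_pos e2, if_pos e2,
      if_neg (show ¬(1 ≤ m - 1 ∧ m - 1 ≤ n - 1) from by omega),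
      if_pos (show m - 1 = 0 from by omega),
      show n - m = n - 1 from by omega]
    ring
  · have e1 : (1 ≤ m ∧ m ≤ n) := ⟨hm, hnm⟩
    have e2 : (1 ≤ n ∧ 1 ≤ m) := ⟨by omega, hm⟩
    rw [if_pos e1, if_pos e2, if_pos e2,
      if_pos (show (1 ≤ m - 1 ∧ m - 1 ≤ n - 1) from by omega),
      if_neg (show ¬(m - 1 = 0) from by omega),
      show n - 1 - (m - 1) = n - m from by omega]
    ring

lemma M2 : (1 - MvPowerSeries.X 0 ^ 2 * MvPowerSeries.X 1 ^ 1) * Vtwo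
    = MvPowerSeries.X 0 ^ 3 * MvPowerSeries.X 1 ^ 1 * Umv := by
  have hexp : (1 - MvPowerSeries.X 0 ^ 2 * MvPowerSeries.X 1 ^ 1) * Vtwo
      = Vtwo - MvPowerSeries.X 0 ^ 2 * MvPowerSeries.X 1 ^ 1 * Vtwo := by ring
  rw [hexp]
  ext d
  rw [map_sub, coeff_shift, coeff_shift]
  simp only [MvPowerSeries.coeff_apply, Vtwo, Umv, shift_apply0, shift_apply1]
  set n := d 0 with hn0
  set m := d 1 with hm0
  rcases Nat.eq_zero_or_pos m with hm | hm
  · simp [hm]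
  rw [if_pos (show 1 ≤ m from hm)]
  by_cases h2 : m = 1
  · rw [if_neg (show ¬(1 ≤ m - 1) from by omega)]
    rcases Nat.lt_or_ge n 3 with hn | hn
    · rw [if_neg (show ¬(3 ≤ n ∧ 1 ≤ m) from by omega),
        show n - 2 * m = 0 from by omega]
      have : (if 2 ≤ n ∧ 1 ≤ m then (0 : ℤ) else 0) = 0 := by split_ifs <;> rfl
      rw [this]
      simp
    · rw [if_pos (show 2 ≤ n ∧ 1 ≤ m from ⟨by omega, hm⟩),
        if_pos (show 3 ≤ n ∧ 1 ≤ m from ⟨hn, hm⟩),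
        if_pos (show m - 1 = 0 from by omega),
        show n - 2 * m = n - 3 + 1 from by omega]
      ring
  · have hr : (if 3 ≤ n ∧ 1 ≤ m then
        (if m - 1 = 0 then (∑ k ∈ Finset.range (n - 3 + 1), (Aev k : ℤ)) else 0) else 0) = 0 := by
      rcases Nat.lt_or_ge n 3 with h3 | h3
      · rw [if_neg (show ¬(3 ≤ n ∧ 1 ≤ m) from by omega)]
      · rw [if_pos (show 3 ≤ n ∧ 1 ≤ m from ⟨h3, hm⟩),
          if_neg (show ¬(m - 1 = 0) from by omega)]
    rw [hr]
    rcases Nat.lt_or_ge n 2 with hn | hn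
    · rw [if_neg (show ¬(2 ≤ n ∧ 1 ≤ m) from by omega),
        show n - 2 * m = 0 from by omega]
      simp
    · rw [if_pos (show 2 ≤ n ∧ 1 ≤ m from ⟨hn, hm⟩),
        if_pos (show 1 ≤ m - 1 from by omega),
        show n - 2 - 2 * (m - 1) = n - 2 * m from by omega]
      ring

lemma M3 : (1 - MvPowerSeries.X 0) * Umv = Amv := by
  have hexp : (1 - MvPowerSeries.X 0) * Umv
      = Umv - MvPowerSeries.X 0 ^ 1 * MvPowerSeries.X 1 ^ 0 * Umv := by ring
  rw [hexp]
  ext d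
  rw [map_sub, coeff_shift]
  simp only [MvPowerSeries.coeff_apply, Umv, Amv, shift_apply0, shift_apply1, Nat.sub_zero]
  set n := d 0 with hn0
  set m := d 1 with hm0
  rcases Nat.eq_zero_or_pos m with hm | hm
  · rcases Nat.eq_zero_or_pos n with hn | hn
    · simp [hm, hn]
    · rw [if_pos hm, if_pos (show 1 ≤ n ∧ 0 ≤ m from ⟨hn, Nat.zero_le _⟩), if_pos hm,
        show n - 1 + 1 = n from by omega, Finset.sum_range_succ, if_pos hm]
      ring
  · simp [show ¬ (m = 0) from by omega]

set_option maxHeartbeats 1600000 in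
lemma M4 : (1 - MvPowerSeries.X 0 - MvPowerSeries.X 0 ^ 2) * Amv
    = 1 - MvPowerSeries.X 0 - MvPowerSeries.X 0 ^ 2 + MvPowerSeries.X 0 ^ 3 := by
  have hexp : (1 - MvPowerSeries.X 0 - MvPowerSeries.X 0 ^ 2) * Amv
      = Amv - MvPowerSeries.X 0 ^ 1 * MvPowerSeries.X 1 ^ 0 * Amv
        - MvPowerSeries.X 0 ^ 2 * MvPowerSeries.X 1 ^ 0 * Amv := by ring
  have hexp2 : (1 - MvPowerSeries.X 0 - MvPowerSeries.X 0 ^ 2 + MvPowerSeries.X 0 ^ 3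
        : MvPowerSeries (Fin 2) ℤ)
      = 1 - MvPowerSeries.X 0 ^ 1 * MvPowerSeries.X 1 ^ 0 * 1
        - MvPowerSeries.X 0 ^ 2 * MvPowerSeries.X 1 ^ 0 * 1
        + MvPowerSeries.X 0 ^ 3 * MvPowerSeries.X 1 ^ 0 * 1 := by ring
  rw [hexp, hexp2]
  ext d
  simp only [map_sub, map_add]
  rw [coeff_shift, coeff_shift, coeff_shift, coeff_shift, coeff_shift]
  rw [MvPowerSeries.coeff_one, MvPowerSeries.coeff_one, MvPowerSeries.coeff_one,
    MvPowerSeries.coeff_one]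
  simp only [MvPowerSeries.coeff_apply, Amv, shift_apply0, shift_apply1, Nat.sub_zero,
    finsupp_eq_zero_iff, Nat.zero_le, and_true, true_and]
  set n := d 0 with hn0
  set m := d 1 with hm0
  rcases Nat.eq_zero_or_pos m with hm | hm
  · have h := Aev_coeff n
    simp only [hm, if_pos rfl, and_true, eq_self_iff_true, if_true]
    rw [h]
    split_ifs <;> omega
  · simp [show ¬ (m = 0) from by omega, show ¬ (n = 0 ∧ m = 0) from by omega]

lemma M5 : arndtLastGF = 1 + Vone + Vtwo := by
  ext d
  rw [map_add, map_add, MvPowerSeries.coeff_one]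
  simp only [MvPowerSeries.coeff_apply, arndtLastGF, Vone, Vtwo, finsupp_eq_zero_iff]
  set n := d 0 with hn0
  set m := d 1 with hm0
  rcases Nat.eq_zero_or_pos m with hm | hm
  · rw [hm, arndtLast_zero n]
    simp only [hm]
    push_cast [apply_ite (fun x : ℕ => (x : ℤ))]
    split_ifs <;> simp_all
  · rw [arndtLast_formula n m hm, if_neg (show ¬(n = 0 ∧ m = 0) from by omega),
      if_pos (show 1 ≤ m from hm)]
    by_cases hmn : m ≤ n
    · rw [if_pos hmn, if_pos ⟨hm, hmn⟩]
      ring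
    · rw [if_neg hmn, if_neg (show ¬(1 ≤ m ∧ m ≤ n) from by simp [hmn])]
      ring

lemma hUnit : IsUnit (1 - MvPowerSeries.X 0 : MvPowerSeries (Fin 2) ℤ) := by
  rw [MvPowerSeries.isUnit_iff_constantCoeff]
  rw [map_sub, map_one, MvPowerSeries.constantCoeff_X, sub_zero]
  exact isUnit_one

lemma hU : (1 - MvPowerSeries.X 0 - MvPowerSeries.X 0 ^ 2) * Umv
    = 1 - MvPowerSeries.X 0 ^ 2 := by
  apply hUnit.mul_left_cancel
  linear_combination (1 - MvPowerSeries.X 0 - MvPowerSeries.X 0 ^ 2) * M3 + M4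


/-- `(1 - x - x²)(1 - xy)(1 - x²y) · B(x,y)
= 1 - x - x² - x²y + 2x³y + 2x⁴y - x⁵y - x⁴y²`. -/
theorem arndtLastGF_eq :
    (1 - MvPowerSeries.X 0 - MvPowerSeries.X 0 ^ 2) *
        (1 - MvPowerSeries.X 0 * MvPowerSeries.X 1) *
        (1 - MvPowerSeries.X 0 ^ 2 * MvPowerSeries.X 1) * arndtLastGF
      = 1 - MvPowerSeries.X 0 - MvPowerSeries.X 0 ^ 2
        - MvPowerSeries.X 0 ^ 2 * MvPowerSeries.X 1
        + 2 * MvPowerSeries.X 0 ^ 3 * MvPowerSeries.X 1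
        + 2 * MvPowerSeries.X 0 ^ 4 * MvPowerSeries.X 1
        - MvPowerSeries.X 0 ^ 5 * MvPowerSeries.X 1
        - MvPowerSeries.X 0 ^ 4 * MvPowerSeries.X 1 ^ 2 := by
  rw [M5]
  linear_combination
    ((1 - MvPowerSeries.X 0 - MvPowerSeries.X 0 ^ 2) *
      (1 - MvPowerSeries.X 0 ^ 2 * MvPowerSeries.X 1)) * M1
    + ((1 - MvPowerSeries.X 0 - MvPowerSeries.X 0 ^ 2) *
      (1 - MvPowerSeries.X 0 * MvPowerSeries.X 1)) * M2
    + ((1 - MvPowerSeries.X 0 ^ 2 * MvPowerSeries.X 1) *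
      MvPowerSeries.X 0 * MvPowerSeries.X 1) * M4
    + ((1 - MvPowerSeries.X 0 * MvPowerSeries.X 1) *
      MvPowerSeries.X 0 ^ 3 * MvPowerSeries.X 1) * hU
end

section
/- For each fixed integer m ≥ 1, b(n,m) ~ (φ^{n−m−2}/√5)(1 + φ^{1−m}) as n → ∞, where φ = (1+√5)/2; that is, the real sequence b(n,m) · √5 / φ^{n−m−2} tends to 1 + φ^{1−m} as n → ∞. -/
namespace ArndtAux

/-! ### list lemmas -/

lemma getD_concat_length (l : List ℕ) (x : ℕ) : (l ++ [x]).getD l.length 0 = x := by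
  rw [List.getD_append_right _ _ _ _ le_rfl]; simp

lemma getLastD_eq_getD (l : List ℕ) (h : l ≠ []) : l.getLastD 0 = l.getD (l.length - 1) 0 := by
  rw [List.getLastD_eq_getLast?, List.getLast?_eq_getLast h]
  show l.getLast h = _
  rw [List.getD_eq_getElem l 0 (by simp [List.length_pos_iff.mpr h] : l.length - 1 < l.length)]
  exact List.getLast_eq_getElem h

lemma eq_concat (l : List ℕ) (h : l ≠ []) : l = l.dropLast ++ [l.getLastD 0] := by
  rw [List.getLastD_eq_getLast?, List.getLast?_eq_getLast h]
  exact (List.dropLast_append_getLast h).symm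

lemma getLastD_concat' (l : List ℕ) (x : ℕ) : (l ++ [x]).getLastD 0 = x := by simp

lemma getD_concat_pre (l : List ℕ) (h : l ≠ []) (x : ℕ) :
    (l ++ [x]).getD ((l ++ [x]).length - 2) 0 = l.getLastD 0 := by
  have hl : 1 ≤ l.length := List.length_pos_iff.mpr h
  have e : (l ++ [x]).length - 2 = l.length - 1 := by simp
  rw [e, List.getD_append _ _ _ _ (by omega), ← getLastD_eq_getD l h]

lemma isArndt_concat_even {l : List ℕ} (h : Even l.length) (x : ℕ) :
    IsArndt (l ++ [x]) ↔ IsArndt l := by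
  obtain ⟨k, hk⟩ := h
  constructor
  · intro H i hi
    have h1 : 2*i+1 < (l ++ [x]).length := by simp; omega
    have := H i h1
    rwa [List.getD_append _ _ _ _ (by omega), List.getD_append _ _ _ _ (by omega)] at this
  · intro H i hi
    simp at hi
    have hi' : 2*i+1 < l.length := by omega
    rw [List.getD_append _ _ _ _ hi', List.getD_append _ _ _ _ (by omega)]
    exact H i hi'

lemma isArndt_concat_odd {l : List ℕ} (h : Odd l.length) (x : ℕ) :
    IsArndt (l ++ [x]) ↔ IsArndt l ∧ x < l.getLastD 0 := by
  obtain ⟨k, hk⟩ := h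
  have hne : l ≠ [] := by intro he; rw [he] at hk; simp at hk
  rw [getLastD_eq_getD l hne]
  constructor
  · intro H
    refine ⟨fun i hi => ?_, ?_⟩
    · have h1 : 2*i+1 < (l ++ [x]).length := by simp; omega
      have := H i h1
      rwa [List.getD_append _ _ _ _ (by omega), List.getD_append _ _ _ _ (by omega)] at this
    · have := H k (by simp; omega)
      have e1 : 2*k+1 = l.length := by omega
      have e2 : (2*k : ℕ) = l.length - 1 := by omega
      rwa [e1, e2, getD_concat_length, List.getD_append _ _ _ _ (by omega)] at this
  · rintro ⟨H, hx⟩ i hi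
    simp at hi
    rcases Nat.lt_or_ge i k with hik | hik
    · have hi' : 2*i+1 < l.length := by omega
      rw [List.getD_append _ _ _ _ hi', List.getD_append _ _ _ _ (by omega)]
      exact H i hi'
    · have hik' : i = k := by omega
      have e1 : 2*i+1 = l.length := by omega
      have e2 : (2*i : ℕ) = l.length - 1 := by omega
      rw [e1, getD_concat_length, List.getD_append _ _ _ _ (by omega), e2]
      exact hx

lemma getLastD_pos {n : ℕ} {l : List ℕ} (hc : IsComposition n l) (h : l ≠ []) :
    0 < l.getLastD 0 := by
  rw [List.getLastD_eq_getLast?, List.getLast?_eq_getLast h]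
  exact hc.1 _ (List.getLast_mem h)

lemma getLastD_le_sum {l : List ℕ} (hpos : ∀ x ∈ l, 0 < x) (h : l ≠ []) :
    l.getLastD 0 ≤ l.sum := by
  rw [List.getLastD_eq_getLast?, List.getLast?_eq_getLast h]
  exact List.single_le_sum (fun x hx => Nat.zero_le x) _ (List.getLast_mem h)

lemma sum_eq_dropLast {l : List ℕ} (h : l ≠ []) :
    l.sum = l.dropLast.sum + l.getLastD 0 := by
  conv_lhs => rw [eq_concat l h]
  simp

lemma ne_nil_of_sum_pos {n : ℕ} {l : List ℕ} (hc : IsComposition n l) (hn : 1 ≤ n) :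
    l ≠ [] := by
  intro he; rw [he] at hc; simp [IsComposition] at hc; omega

/-! ### the sets -/

def ESet (t : ℕ) : Set (List ℕ) := {l | IsComposition t l ∧ IsArndt l ∧ Even l.length}
def OSet (t : ℕ) : Set (List ℕ) := {l | IsComposition t l ∧ IsArndt l ∧ Odd l.length}
def OmSet (t m : ℕ) : Set (List ℕ) :=
  {l | IsComposition t l ∧ IsArndt l ∧ Odd l.length ∧ l.getLastD 0 = m}
def RSet (t b : ℕ) : Set (List ℕ) :=
  {l | IsComposition t l ∧ IsArndt l ∧ Odd l.length ∧ b < l.getLastD 0}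
def ELSet (t b : ℕ) : Set (List ℕ) :=
  {l | IsComposition t l ∧ IsArndt l ∧ Even l.length ∧ l.getLastD 0 = b}
def EgSet (t d : ℕ) : Set (List ℕ) :=
  {l | IsComposition t l ∧ IsArndt l ∧ Even l.length ∧ l ≠ [] ∧
    l.getLastD 0 + d ≤ l.getD (l.length - 2) 0}

lemma finite_of_comp {n : ℕ} {S : Set (List ℕ)} (h : ∀ l ∈ S, IsComposition n l) :
    S.Finite := by
  apply Set.Finite.subset (Set.Finite.image (fun c : Composition n => c.blocks) Set.finite_univ)
  intro l hl
  exact ⟨⟨l, fun hi => (h l hl).1 _ hi, (h l hl).2⟩, Set.mem_univ _, rfl⟩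

/-! ### bijections -/

lemma concat_injOn (x : ℕ) (S : Set (List ℕ)) : Set.InjOn (fun l => l ++ [x]) S :=
  fun a _ b _ h => List.append_left_injective [x] h

lemma modLast_injOn (c : ℕ) (S : Set (List ℕ)) (hS : ∀ l ∈ S, l ≠ []) :
    Set.InjOn (fun l => l.dropLast ++ [l.getLastD 0 + c]) S := by
  intro a ha b hb h
  simp only at h
  have h1 := congrArg (fun l => List.getLastD l 0) h
  simp only [getLastD_concat'] at h1
  have h2 : a.getLastD 0 = b.getLastD 0 := by omega
  rw [h2] at h
  have h3 := List.append_left_injective _ h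
  rw [eq_concat a (hS a ha), eq_concat b (hS b hb), h2, h3]

lemma ncard_OmSet {t m : ℕ} (hm : 1 ≤ m) (htm : m ≤ t) :
    (OmSet t m).ncard = (ESet (t - m)).ncard := by
  have himg : (fun l => l ++ [m]) '' (ESet (t - m)) = OmSet t m := by
    ext l'
    constructor
    · rintro ⟨l, ⟨⟨hpos, hsum⟩, harndt, heven⟩, rfl⟩
      refine ⟨⟨?_, ?_⟩, ?_, ?_, ?_⟩
      · intro x hx
        rcases List.mem_append.mp hx with h | h
        · exact hpos x h
        · rw [List.mem_singleton] at h; omega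
      · simp [hsum]; omega
      · exact (isArndt_concat_even heven m).mpr harndt
      · simpa [Nat.odd_add_one, parity_simps] using heven
      · exact getLastD_concat' _ _
    · rintro ⟨⟨hpos, hsum⟩, harndt, hodd, hlast⟩
      have hne : l' ≠ [] := by rintro rfl; simp at hodd
      have hD := eq_concat l' hne
      have heven : Even l'.dropLast.length := by
        rcases hodd with ⟨k, hk⟩
        have : l'.dropLast.length = l'.length - 1 := List.length_dropLast (xs := l')
        exact ⟨k, by omega⟩
      have hsumD := sum_eq_dropLast hne
      refine ⟨l'.dropLast, ⟨⟨?_, ?_⟩, ?_, ?_⟩, by rw [hlast] at hD; exact hD.symm⟩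
      · intro x hx; exact hpos x (List.dropLast_subset _ hx)
      · omega
      · exact (isArndt_concat_even heven (l'.getLastD 0)).mp (by rw [← hD]; exact harndt)
      · exact heven
  rw [← himg, Set.ncard_image_of_injOn (concat_injOn _ _)]

lemma OSet_zero : OSet 0 = ∅ := by
  ext l
  simp only [OSet, Set.mem_setOf_eq, Set.mem_empty_iff_false, iff_false]
  rintro ⟨⟨hpos, hsum⟩, _, hodd⟩
  cases l with
  | nil => simp at hodd
  | cons a t =>
    have := hpos a (by simp)
    simp [List.sum_cons] at hsum
    omega

lemma ncard_RSet (s b : ℕ) : (RSet s b).ncard = (OSet (s - b)).ncard := by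
  rcases le_or_gt s b with hsb | hsb
  · have h1 : RSet s b = ∅ := by
      ext l
      simp only [RSet, Set.mem_setOf_eq, Set.mem_empty_iff_false, iff_false]
      rintro ⟨⟨hpos, hsum⟩, _, hodd, hblt⟩
      have hne : l ≠ [] := by rintro rfl; simp at hodd
      have := getLastD_le_sum hpos hne
      omega
    have h2 : s - b = 0 := by omega
    rw [h1, h2, OSet_zero]
  · have himg : (fun l => l.dropLast ++ [l.getLastD 0 + b]) '' (OSet (s - b)) = RSet s b := by
      ext l'
      constructor
      · rintro ⟨l, ⟨⟨hpos, hsum⟩, harndt, hodd⟩, rfl⟩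
        have hne : l ≠ [] := by rintro rfl; simp at hodd
        have hD := eq_concat l hne
        have hlpos := getLastD_pos ⟨hpos, hsum⟩ hne
        have heven : Even l.dropLast.length := by
          rcases hodd with ⟨k, hk⟩
          have : l.dropLast.length = l.length - 1 := List.length_dropLast (xs := l)
          exact ⟨k, by omega⟩
        have hsumD := sum_eq_dropLast hne
        refine ⟨⟨?_, ?_⟩, ?_, ?_, ?_⟩
        · intro x hx
          rcases List.mem_append.mp hx with h | h
          · exact hpos x (List.dropLast_subset _ h)
          · rw [List.mem_singleton] at h; omega
        · rw [List.sum_append, List.sum_cons, List.sum_nil]; omega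
        · exact (isArndt_concat_even heven _).mpr
            ((isArndt_concat_even heven _).mp (by rw [← hD]; exact harndt))
        · rcases hodd with ⟨k, hk⟩
          have : l.dropLast.length = l.length - 1 := List.length_dropLast (xs := l)
          rw [List.length_append]
          exact ⟨k, by simp; omega⟩
        · rw [getLastD_concat']; omega
      · rintro ⟨⟨hpos, hsum⟩, harndt, hodd, hblt⟩
        have hne : l' ≠ [] := by rintro rfl; simp at hodd
        have hD := eq_concat l' hne
        have hlpos := getLastD_pos ⟨hpos, hsum⟩ hne
        have heven : Even l'.dropLast.length := by
          rcases hodd with ⟨k, hk⟩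
          have : l'.dropLast.length = l'.length - 1 := List.length_dropLast (xs := l')
          exact ⟨k, by omega⟩
        have hsumD := sum_eq_dropLast hne
        refine ⟨l'.dropLast ++ [l'.getLastD 0 - b], ⟨⟨?_, ?_⟩, ?_, ?_⟩, ?_⟩
        · intro x hx
          rcases List.mem_append.mp hx with h | h
          · exact hpos x (List.dropLast_subset _ h)
          · rw [List.mem_singleton] at h; omega
        · rw [List.sum_append, List.sum_cons, List.sum_nil]; omega
        · exact (isArndt_concat_even heven _).mpr
            ((isArndt_concat_even heven _).mp (by rw [← hD]; exact harndt))
        · rcases hodd with ⟨k, hk⟩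
          have : l'.dropLast.length = l'.length - 1 := List.length_dropLast (xs := l')
          rw [List.length_append]
          exact ⟨k, by simp; omega⟩
        · dsimp only
          rw [List.dropLast_concat, getLastD_concat']
          rw [show l'.getLastD 0 - b + b = l'.getLastD 0 by omega, ← hD]
    rw [← himg]
    rw [Set.ncard_image_of_injOn (modLast_injOn b _ (fun l hl => by
      rcases hl with ⟨_, _, hodd⟩
      rintro rfl; simp at hodd))]

lemma ncard_ELSet {t b : ℕ} (hb : 1 ≤ b) (htb : b ≤ t) :
    (ELSet t b).ncard = (RSet (t - b) b).ncard := by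
  have himg : (fun l => l ++ [b]) '' (RSet (t - b) b) = ELSet t b := by
    ext l'
    constructor
    · rintro ⟨l, ⟨⟨hpos, hsum⟩, harndt, hodd, hblt⟩, rfl⟩
      refine ⟨⟨?_, ?_⟩, ?_, ?_, ?_⟩
      · intro x hx
        rcases List.mem_append.mp hx with h | h
        · exact hpos x h
        · rw [List.mem_singleton] at h; omega
      · simp [hsum]; omega
      · exact (isArndt_concat_odd hodd b).mpr ⟨harndt, hblt⟩
      · simpa [Nat.even_add_one, parity_simps] using hodd
      · exact getLastD_concat' _ _
    · rintro ⟨⟨hpos, hsum⟩, harndt, heven, hlast⟩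
      have hne : l' ≠ [] := by rintro rfl; simp at hlast; omega
      have hD := eq_concat l' hne
      have hoddA : Odd l'.dropLast.length := by
        have h1 : l'.dropLast.length = l'.length - 1 := List.length_dropLast (xs := l')
        have h2 : 1 ≤ l'.length := List.length_pos_iff.mpr hne
        rcases heven with ⟨k, hk⟩
        exact ⟨k - 1, by omega⟩
      have hsumD := sum_eq_dropLast hne
      have hAr := (isArndt_concat_odd hoddA (l'.getLastD 0)).mp (by rw [← hD]; exact harndt)
      refine ⟨l'.dropLast, ⟨⟨?_, ?_⟩, ?_, ?_, ?_⟩, by rw [hlast] at hD; exact hD.symm⟩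
      · intro x hx; exact hpos x (List.dropLast_subset _ hx)
      · omega
      · exact hAr.1
      · exact hoddA
      · rw [← hlast]; exact hAr.2
  rw [← himg, Set.ncard_image_of_injOn (concat_injOn _ _)]

lemma EgSet_eq_empty {t d : ℕ} (h : t < d + 2) : EgSet t d = ∅ := by
  ext l
  simp only [EgSet, Set.mem_setOf_eq, Set.mem_empty_iff_false, iff_false]
  rintro ⟨⟨hpos, hsum⟩, harndt, heven, hne, hgap⟩
  have hlen : 2 ≤ l.length := by
    rcases heven with ⟨k, hk⟩
    have := List.length_pos_iff.mpr hne
    omega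
  have hAne : l.dropLast ≠ [] := by
    have hd := List.length_dropLast (xs := l)
    intro he; rw [he] at hd; simp at hd; omega
  have hD := eq_concat l hne
  have hpre : l.getD (l.length - 2) 0 = l.dropLast.getLastD 0 := by
    have := getD_concat_pre l.dropLast hAne (l.getLastD 0)
    rw [← hD] at this
    exact this
  have h1 : l.dropLast.getLastD 0 ≤ l.dropLast.sum :=
    getLastD_le_sum (fun x hx => hpos x (List.dropLast_subset _ hx)) hAne
  have h2 := sum_eq_dropLast hne
  have h3 := getLastD_pos ⟨hpos, hsum⟩ hne
  omega

lemma ESet_eq_EgSet {t : ℕ} (ht : 1 ≤ t) : ESet t = EgSet t 1 := by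
  ext l
  simp only [ESet, EgSet, Set.mem_setOf_eq]
  constructor
  · rintro ⟨hc, ha, he⟩
    have hne : l ≠ [] := ne_nil_of_sum_pos hc ht
    have hlen : 2 ≤ l.length := by
      rcases he with ⟨k, hk⟩; have := List.length_pos_iff.mpr hne; omega
    have hAne : l.dropLast ≠ [] := by
      have hd := List.length_dropLast (xs := l)
      intro h; rw [h] at hd; simp at hd; omega
    have hD := eq_concat l hne
    have hoddA : Odd l.dropLast.length := by
      rcases he with ⟨k, hk⟩
      have := List.length_dropLast (xs := l)
      exact ⟨k - 1, by omega⟩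
    have hAr := (isArndt_concat_odd hoddA (l.getLastD 0)).mp (by rw [← hD]; exact ha)
    refine ⟨hc, ha, he, hne, ?_⟩
    have hpre := getD_concat_pre l.dropLast hAne (l.getLastD 0)
    rw [← hD] at hpre
    omega
  · rintro ⟨hc, ha, he, _, _⟩
    exact ⟨hc, ha, he⟩

lemma ncard_EgSet_rec {t d : ℕ} (hd : 1 ≤ d) (ht : d + 2 ≤ t) :
    (EgSet t d).ncard = (RSet (t - 1) d).ncard + (EgSet (t - 1) (d + 1)).ncard := by
  classical
  set S1 : Set (List ℕ) := EgSet t d ∩ {l | l.getLastD 0 = 1} with hS1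
  set S2 : Set (List ℕ) := EgSet t d ∩ {l | 2 ≤ l.getLastD 0} with hS2
  have hsplit : EgSet t d = S1 ∪ S2 := by
    ext l
    constructor
    · intro hl
      have hne : l ≠ [] := hl.2.2.2.1
      have := getLastD_pos hl.1 hne
      rcases Nat.lt_or_ge 1 (l.getLastD 0) with h | h
      · exact Or.inr ⟨hl, h⟩
      · exact Or.inl ⟨hl, show l.getLastD 0 = 1 by omega⟩
    · rintro (⟨hl, _⟩ | ⟨hl, _⟩) <;> exact hl
  have h1 : S1.ncard = (RSet (t - 1) d).ncard := by
    have himg : (fun l => l ++ [1]) '' (RSet (t - 1) d) = S1 := by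
      ext l'
      constructor
      · rintro ⟨l, ⟨⟨hpos, hsum⟩, ha, hodd, hdlt⟩, rfl⟩
        have hne : l ≠ [] := by rintro rfl; simp at hodd
        refine ⟨⟨⟨?_, ?_⟩, ?_, ?_, ?_, ?_⟩, ?_⟩
        · intro x hx
          rcases List.mem_append.mp hx with h | h
          · exact hpos x h
          · rw [List.mem_singleton] at h; omega
        · rw [List.sum_append, List.sum_cons, List.sum_nil]; omega
        · exact (isArndt_concat_odd hodd 1).mpr ⟨ha, by omega⟩
        · simpa [Nat.even_add_one, parity_simps] using hodd
        · simp
        · rw [getD_concat_pre l hne 1, getLastD_concat']; omega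
        · exact getLastD_concat' _ _
      · rintro ⟨⟨⟨hpos, hsum⟩, ha, he, hne, hgap⟩, hlast⟩
        simp only [Set.mem_setOf_eq] at hlast
        have hlen : 2 ≤ l'.length := by
          rcases he with ⟨k, hk⟩; have := List.length_pos_iff.mpr hne; omega
        have hAne : l'.dropLast ≠ [] := by
          have hdd := List.length_dropLast (xs := l')
          intro h; rw [h] at hdd; simp at hdd; omega
        have hD := eq_concat l' hne
        have hoddA : Odd l'.dropLast.length := by
          rcases he with ⟨k, hk⟩
          have := List.length_dropLast (xs := l')
          exact ⟨k - 1, by omega⟩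
        have hAr := (isArndt_concat_odd hoddA (l'.getLastD 0)).mp (by rw [← hD]; exact ha)
        have hpre := getD_concat_pre l'.dropLast hAne (l'.getLastD 0)
        rw [← hD] at hpre
        have hsumD := sum_eq_dropLast hne
        refine ⟨l'.dropLast, ⟨⟨?_, ?_⟩, hAr.1, hoddA, ?_⟩, ?_⟩
        · intro x hx; exact hpos x (List.dropLast_subset _ hx)
        · omega
        · omega
        · rw [hlast] at hD; exact hD.symm
    rw [← himg, Set.ncard_image_of_injOn (concat_injOn _ _)]
  have h2 : S2.ncard = (EgSet (t - 1) (d + 1)).ncard := by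
    have himg : (fun l => l.dropLast ++ [l.getLastD 0 + 1]) '' (EgSet (t - 1) (d + 1)) = S2 := by
      ext l'
      constructor
      · rintro ⟨l, ⟨⟨hpos, hsum⟩, ha, he, hne, hgap⟩, rfl⟩
        have hlen : 2 ≤ l.length := by
          rcases he with ⟨k, hk⟩; have := List.length_pos_iff.mpr hne; omega
        have hAne : l.dropLast ≠ [] := by
          have hdd := List.length_dropLast (xs := l)
          intro h; rw [h] at hdd; simp at hdd; omega
        have hD := eq_concat l hne
        have hoddA : Odd l.dropLast.length := by
          rcases he with ⟨k, hk⟩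
          have := List.length_dropLast (xs := l)
          exact ⟨k - 1, by omega⟩
        have hAr := (isArndt_concat_odd hoddA (l.getLastD 0)).mp (by rw [← hD]; exact ha)
        have hpre := getD_concat_pre l.dropLast hAne (l.getLastD 0)
        rw [← hD] at hpre
        have hsumD := sum_eq_dropLast hne
        have hlpos := getLastD_pos ⟨hpos, hsum⟩ hne
        refine ⟨⟨⟨?_, ?_⟩, ?_, ?_, ?_, ?_⟩, ?_⟩
        · intro x hx
          rcases List.mem_append.mp hx with h | h
          · exact hpos x (List.dropLast_subset _ h)
          · rw [List.mem_singleton] at h; omega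
        · rw [List.sum_append, List.sum_cons, List.sum_nil]; omega
        · exact (isArndt_concat_odd hoddA _).mpr ⟨hAr.1, by omega⟩
        · simpa [Nat.even_add_one, parity_simps] using hoddA
        · simp
        · rw [getD_concat_pre l.dropLast hAne _, getLastD_concat']; omega
        · simp only [Set.mem_setOf_eq, getLastD_concat']; omega
      · rintro ⟨⟨⟨hpos, hsum⟩, ha, he, hne, hgap⟩, h2l⟩
        simp only [Set.mem_setOf_eq] at h2l
        have hlen : 2 ≤ l'.length := by
          rcases he with ⟨k, hk⟩; have := List.length_pos_iff.mpr hne; omega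
        have hAne : l'.dropLast ≠ [] := by
          have hdd := List.length_dropLast (xs := l')
          intro h; rw [h] at hdd; simp at hdd; omega
        have hD := eq_concat l' hne
        have hoddA : Odd l'.dropLast.length := by
          rcases he with ⟨k, hk⟩
          have := List.length_dropLast (xs := l')
          exact ⟨k - 1, by omega⟩
        have hAr := (isArndt_concat_odd hoddA (l'.getLastD 0)).mp (by rw [← hD]; exact ha)
        have hpre := getD_concat_pre l'.dropLast hAne (l'.getLastD 0)
        rw [← hD] at hpre
        have hsumD := sum_eq_dropLast hne
        refine ⟨l'.dropLast ++ [l'.getLastD 0 - 1], ⟨⟨?_, ?_⟩, ?_, ?_, ?_, ?_⟩, ?_⟩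
        · intro x hx
          rcases List.mem_append.mp hx with h | h
          · exact hpos x (List.dropLast_subset _ h)
          · rw [List.mem_singleton] at h; omega
        · rw [List.sum_append, List.sum_cons, List.sum_nil]; omega
        · exact (isArndt_concat_odd hoddA _).mpr ⟨hAr.1, by omega⟩
        · simpa [Nat.even_add_one, parity_simps] using hoddA
        · simp
        · rw [getD_concat_pre l'.dropLast hAne _, getLastD_concat']; omega
        · dsimp only
          rw [List.dropLast_concat, getLastD_concat']
          rw [show l'.getLastD 0 - 1 + 1 = l'.getLastD 0 by omega, ← hD]
    rw [← himg]
    exact Set.ncard_image_of_injOn (modLast_injOn 1 _ (fun l hl => hl.2.2.2.1))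
  have hdisj : Disjoint S1 S2 := by
    rw [Set.disjoint_left]
    rintro l ⟨_, ha⟩ ⟨_, hb⟩
    simp only [Set.mem_setOf_eq] at ha hb
    omega
  rw [hsplit, Set.ncard_union_eq hdisj (finite_of_comp (fun l hl => hl.1.1))
    (finite_of_comp (fun l hl => hl.1.1)), h1, h2]

lemma OSet_split {t : ℕ} : OSet t = OmSet t 1 ∪ RSet t 1 := by
  ext l
  simp only [OSet, OmSet, RSet, Set.mem_setOf_eq, Set.mem_union]
  constructor
  · rintro ⟨hc, ha, ho⟩
    have hne : l ≠ [] := by rintro rfl; simp at ho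
    have := getLastD_pos hc hne
    rcases Nat.lt_or_ge 1 (l.getLastD 0) with h | h
    · exact Or.inr ⟨hc, ha, ho, h⟩
    · exact Or.inl ⟨hc, ha, ho, by omega⟩
  · rintro (⟨hc, ha, ho, _⟩ | ⟨hc, ha, ho, _⟩) <;> exact ⟨hc, ha, ho⟩

lemma ncard_OSet_rec {t : ℕ} (ht : 1 ≤ t) :
    (OSet t).ncard = (ESet (t - 1)).ncard + (OSet (t - 1)).ncard := by
  rw [OSet_split]
  have hdisj : Disjoint (OmSet t 1) (RSet t 1) := by
    rw [Set.disjoint_left]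
    rintro l ⟨_, _, _, h1⟩ ⟨_, _, _, h2⟩
    omega
  rw [Set.ncard_union_eq hdisj (finite_of_comp (fun l hl => hl.1))
    (finite_of_comp (fun l hl => hl.1))]
  rw [ncard_OmSet le_rfl ht, ncard_RSet]

lemma ESet_zero : ESet 0 = {([] : List ℕ)} := by
  ext l
  simp only [ESet, Set.mem_setOf_eq, Set.mem_singleton_iff]
  constructor
  · rintro ⟨⟨hpos, hsum⟩, _, _⟩
    cases l with
    | nil => rfl
    | cons a tl =>
      have := hpos a (by simp)
      simp [List.sum_cons] at hsum
      omega
  · rintro rfl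
    exact ⟨⟨by simp, by simp⟩, fun i hi => by simp at hi, by simp⟩

/-! ### counting -/

lemma main_counts (t : ℕ) :
    (∀ d, 1 ≤ d → (EgSet t d).ncard = Nat.fib (t - d - 1)) ∧
    (ESet t).ncard = (if t = 0 then 1 else Nat.fib (t - 2)) ∧
    (OSet t).ncard = (if t = 1 then 1 else Nat.fib (t - 1)) := by
  induction t using Nat.strong_induction_on with
  | _ t IH =>
  have hEg : ∀ d, 1 ≤ d → (EgSet t d).ncard = Nat.fib (t - d - 1) := by
    intro d hd
    rcases Nat.lt_or_ge t (d + 2) with hlt | hge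
    · rw [EgSet_eq_empty hlt, Set.ncard_empty]
      have e : t - d - 1 = 0 := by omega
      rw [e, Nat.fib_zero]
    · rw [ncard_EgSet_rec hd hge, ncard_RSet]
      have h1 := (IH (t - 1 - d) (by omega)).2.2
      have h2 := (IH (t - 1) (by omega)).1 (d + 1) (by omega)
      rw [h1, h2]
      rcases Nat.eq_or_lt_of_le hge with he | hlt2
      · have e2 : t - 1 - d = 1 := by omega
        rw [if_pos e2]
        have e3 : t - 1 - (d + 1) - 1 = 0 := by omega
        have e4 : t - d - 1 = 1 := by omega
        rw [e3, e4, Nat.fib_zero, Nat.fib_one]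
      · have e2 : t - 1 - d ≠ 1 := by omega
        rw [if_neg e2]
        have e3 : t - 1 - d - 1 = (t - d - 3) + 1 := by omega
        have e4 : t - 1 - (d + 1) - 1 = t - d - 3 := by omega
        have e5 : t - d - 1 = (t - d - 3) + 2 := by omega
        rw [e3, e4, e5, Nat.fib_add_two]
        exact Nat.add_comm _ _
  have hE : (ESet t).ncard = (if t = 0 then 1 else Nat.fib (t - 2)) := by
    rcases Nat.eq_zero_or_pos t with rfl | ht
    · rw [ESet_zero, if_pos rfl, Set.ncard_singleton]
    · rw [if_neg (by omega), ESet_eq_EgSet ht, hEg 1 le_rfl]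
      congr 1
  refine ⟨hEg, hE, ?_⟩
  rcases Nat.eq_zero_or_pos t with rfl | ht
  · rw [OSet_zero, Set.ncard_empty, if_neg (by omega)]
    rfl
  · rw [ncard_OSet_rec ht, (IH (t - 1) (by omega)).2.1, (IH (t - 1) (by omega)).2.2]
    by_cases h1t : t = 1
    · subst h1t
      norm_num
    · by_cases h2t : t = 2
      · subst h2t
        norm_num
      · rw [if_neg (by omega), if_neg (by omega), if_neg (by omega)]
        have e3 : t - 1 - 2 = (t - 3) := by omega
        have e4 : t - 1 - 1 = (t - 3) + 1 := by omega
        have e5 : t - 1 = (t - 3) + 2 := by omega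
        rw [e3, e4, e5, Nat.fib_add_two]

lemma arndtLast_eq {n m : ℕ} (hm : 1 ≤ m) (hn : 2 * m + 2 ≤ n) :
    arndtLast n m = Nat.fib (n - m - 2) + Nat.fib (n - 2 * m - 1) := by
  have hsplit : {l : List ℕ | IsComposition n l ∧ IsArndt l ∧ l.getLastD 0 = m}
      = OmSet n m ∪ ELSet n m := by
    ext l
    simp only [Set.mem_setOf_eq, OmSet, ELSet, Set.mem_union]
    constructor
    · rintro ⟨hc, ha, hl⟩
      rcases Nat.even_or_odd l.length with he | ho
      · exact Or.inr ⟨hc, ha, he, hl⟩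
      · exact Or.inl ⟨hc, ha, ho, hl⟩
    · rintro (⟨hc, ha, _, hl⟩ | ⟨hc, ha, _, hl⟩) <;> exact ⟨hc, ha, hl⟩
  have hdisj : Disjoint (OmSet n m) (ELSet n m) := by
    rw [Set.disjoint_left]
    rintro l ⟨_, _, ho, _⟩ ⟨_, _, he, _⟩
    exact (Nat.not_odd_iff_even.mpr he) ho
  rw [arndtLast, hsplit, Set.ncard_union_eq hdisj (finite_of_comp fun l hl => hl.1)
    (finite_of_comp fun l hl => hl.1)]
  rw [ncard_OmSet hm (by omega), ncard_ELSet hm (by omega), ncard_RSet]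
  rw [(main_counts (n - m)).2.1, (main_counts (n - m - m)).2.2]
  rw [if_neg (by omega), if_neg (by omega)]
  have e1 : n - m - m - 1 = n - 2 * m - 1 := by omega
  rw [e1]

end ArndtAux

/-- for fixed `m ≥ 1`, `b(n,m) ~ (φ^{n-m-2}/√5)(1 + φ^{1-m})` as `n → ∞`,
where `φ = (1+√5)/2`. -/
theorem arndtLast_asymptotic (m : ℕ) (hm : 1 ≤ m) :
    Filter.Tendsto
      (fun n : ℕ =>
        (arndtLast n m : ℝ) * Real.sqrt 5 /
          ((1 + Real.sqrt 5) / 2) ^ ((n : ℤ) - (m : ℤ) - 2))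
      Filter.atTop (nhds (1 + ((1 + Real.sqrt 5) / 2) ^ (1 - (m : ℤ)))) := by
  have hgoldenRatio0 : (0:ℝ) < Real.goldenRatio := Real.goldenRatio_pos
  have hgoldenConj : |Real.goldenConj| < 1 :=
    abs_lt.mpr ⟨Real.neg_one_lt_goldenConj, lt_trans Real.goldenConj_neg one_pos⟩
  have hr : |Real.goldenConj / Real.goldenRatio| < 1 := by
    rw [abs_div, abs_of_pos hgoldenRatio0, div_lt_one hgoldenRatio0]
    have := Real.one_lt_goldenRatio
    linarith [hgoldenConj]
  have hlim1 : Filter.Tendsto (fun n : ℕ => (Real.goldenConj / Real.goldenRatio) ^ (n - (m + 2))) Filter.atTop (nhds 0) :=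
    (tendsto_pow_atTop_nhds_zero_of_abs_lt_one hr).comp (Filter.tendsto_sub_atTop_nat (m + 2))
  have hlim2 : Filter.Tendsto (fun n : ℕ => (Real.goldenConj / Real.goldenRatio) ^ (n - (2 * m + 1))) Filter.atTop (nhds 0) :=
    (tendsto_pow_atTop_nhds_zero_of_abs_lt_one hr).comp (Filter.tendsto_sub_atTop_nat (2 * m + 1))
  have hg : Filter.Tendsto
      (fun n : ℕ => (1 + Real.goldenRatio ^ (1 - (m:ℤ))) -
        ((Real.goldenConj / Real.goldenRatio) ^ (n - (m + 2)) + Real.goldenRatio ^ (1 - (m:ℤ)) * (Real.goldenConj / Real.goldenRatio) ^ (n - (2 * m + 1))))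
      Filter.atTop (nhds (1 + Real.goldenRatio ^ (1 - (m:ℤ)))) := by
    have h := (hlim1.add (hlim2.const_mul (Real.goldenRatio ^ (1 - (m:ℤ))))).const_sub (1 + Real.goldenRatio ^ (1 - (m:ℤ)))
    simpa using h
  refine hg.congr' ?_
  filter_upwards [Filter.eventually_ge_atTop (2 * m + 2)] with n hn
  have e1 : arndtLast n m = Nat.fib (n - m - 2) + Nat.fib (n - 2 * m - 1) :=
    ArndtAux.arndtLast_eq hm hn
  set a := n - m - 2 with ha
  set b := n - 2 * m - 1 with hb
  have ea1 : n - (m + 2) = a := by omega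
  have eb1 : n - (2 * m + 1) = b := by omega
  have ea : (n:ℤ) - m - 2 = (a:ℤ) := by push_cast; omega
  have ebm : (1 : ℤ) - (m:ℤ) = (b:ℤ) - (a:ℤ) := by push_cast; omega
  rw [e1, ea1, eb1, ea, ebm, zpow_natCast, zpow_sub₀ Real.goldenRatio_ne_zero, zpow_natCast, zpow_natCast]
  have h5 : Real.sqrt 5 ≠ 0 := by positivity
  have hpa : (Real.goldenRatio:ℝ) ^ a ≠ 0 := pow_ne_zero _ Real.goldenRatio_ne_zero
  have hpb : (Real.goldenRatio:ℝ) ^ b ≠ 0 := pow_ne_zero _ Real.goldenRatio_ne_zero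
  push_cast [Real.coe_fib_eq]
  rw [div_pow Real.goldenConj Real.goldenRatio a, div_pow Real.goldenConj Real.goldenRatio b]
  rw [show ((1 + Real.sqrt 5) / 2 : ℝ) = Real.goldenRatio from rfl]
  generalize Real.goldenRatio = φ at *
  generalize Real.goldenConj = ψ at *
  field_simp
  ring
end

section
/- The expected value of the last part of a uniformly random Arndt composition of n tends to √5 as n → ∞; that is, the real sequence d(n) / F_n tends to √5 as n → ∞. -/
/-- `lastSum n` is the sum of the last parts over all (nonempty) Arndt compositions of `n`
(the empty composition contributes `0`). -/
noncomputable def lastSum (n : ℕ) : ℕ :=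
  ∑ᶠ l ∈ {l : List ℕ | IsComposition n l ∧ IsArndt l}, l.getLastD 0

def pairF (s : ℕ) : Finset (ℕ × ℕ) :=
  (Finset.Ico 1 ((s + 1) / 2)).map
    ⟨fun b => (s - b, b), fun x y h => by simpa using congrArg Prod.snd h⟩

lemma mem_pairF {s a b : ℕ} : (a, b) ∈ pairF s ↔ b < a ∧ 1 ≤ b ∧ a + b = s := by
  simp only [pairF, Finset.mem_map, Finset.mem_Ico, Function.Embedding.coeFn_mk, Prod.mk.injEq]
  constructor
  · rintro ⟨x, ⟨h1, h2⟩, rfl, rfl⟩; omega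
  · rintro ⟨h1, h2, h3⟩; exact ⟨b, ⟨h2, by omega⟩, Prod.ext (show s - b = a by omega) rfl⟩

lemma pairF_card (s : ℕ) : (pairF s).card = (s - 1) / 2 := by
  rw [pairF, Finset.card_map, Nat.card_Ico]; omega

def wF (s : ℕ) : ℕ := ∑ ab ∈ pairF s, ab.2

lemma wF_eq (s : ℕ) : wF s = ∑ b ∈ Finset.Ico 1 ((s + 1) / 2), b := by
  rw [wF, pairF, Finset.sum_map]; rfl

lemma wF_step (s : ℕ) (hs : 1 ≤ s) : wF (s + 2) = wF s + (s + 1) / 2 := by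
  rw [wF_eq, wF_eq]
  have h1 : (s + 2 + 1) / 2 = (s + 1) / 2 + 1 := by omega
  rw [h1, Finset.sum_Ico_succ_top (by omega)]

lemma isArndt_singleton_s18 (a : ℕ) : IsArndt [a] := fun i hi => by
  simp at hi

def arndtF : ℕ → Finset (List ℕ)
  | 0 => {[]}
  | (n + 1) =>
    insert [n + 1] <|
      (Finset.range (n + 1)).attach.biUnion fun m =>
        (pairF (n + 1 - m.1)).biUnion fun ab =>
          (arndtF m.1).image fun l => ab.1 :: ab.2 :: l
  decreasing_by exact Finset.mem_range.mp m.2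

theorem mem_arndtF : ∀ n : ℕ, ∀ l : List ℕ,
    l ∈ arndtF n ↔ (IsComposition n l ∧ IsArndt l) := by
  intro n
  induction n using Nat.strong_induction_on with
  | _ n ih =>
    match n with
    | 0 =>
      intro l
      rw [arndtF]
      simp only [Finset.mem_singleton]
      constructor
      · rintro rfl; exact ⟨⟨by simp, by simp⟩, isArndt_nil⟩
      · rintro ⟨⟨hpos, hsum⟩, -⟩
        match l with
        | [] => rfl
        | (x :: t) =>
          exfalso
          have := hpos x (by simp)
          simp only [List.sum_cons] at hsum
          omega
    | (n + 1) =>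
      intro l
      rw [arndtF]
      simp only [Finset.mem_insert, Finset.mem_biUnion, Finset.mem_attach, Finset.mem_image,
        true_and]
      constructor
      · rintro (rfl | ⟨⟨m, hm⟩, ⟨a, b⟩, hab, r, hr, rfl⟩)
        · exact ⟨⟨by simp, by simp⟩, isArndt_singleton_s18 _⟩
        · have hm' : m < n + 1 := Finset.mem_range.mp hm
          obtain ⟨hba, hb, habs⟩ := mem_pairF.mp hab
          change a + b = n + 1 - m at habs
          obtain ⟨⟨hpos, hsum⟩, har⟩ := (ih m hm' r).mp hr
          refine ⟨⟨?_, ?_⟩, isArndt_cons_cons.mpr ⟨hba, har⟩⟩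
          · intro x hx
            simp only [List.mem_cons] at hx
            rcases hx with rfl | rfl | hx
            · omega
            · omega
            · exact hpos x hx
          · simp only [List.sum_cons]; omega
      · rintro ⟨⟨hpos, hsum⟩, har⟩
        match l with
        | [] => simp at hsum
        | [x] =>
          left
          simp only [List.sum_cons, List.sum_nil, add_zero] at hsum
          rw [hsum]
        | (a :: b :: r) =>
          right
          obtain ⟨hba, har'⟩ := isArndt_cons_cons.mp har
          have hb : 1 ≤ b := hpos b (by simp)
          simp only [List.sum_cons] at hsum
          have hmlt : r.sum < n + 1 := by omega
          refine ⟨⟨r.sum, Finset.mem_range.mpr hmlt⟩, (a, b),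
            mem_pairF.mpr ⟨hba, hb, show a + b = n + 1 - r.sum by omega⟩, r, (ih r.sum hmlt r).mpr
              ⟨⟨fun x hx => hpos x (by simp [hx]), rfl⟩, har'⟩, rfl⟩

def D (n : ℕ) : ℕ := ∑ l ∈ arndtF n, l.getLastD 0

lemma lastSum_eq (n : ℕ) : lastSum n = D n := by
  rw [lastSum]
  have h : {l : List ℕ | IsComposition n l ∧ IsArndt l} = ↑(arndtF n) := by
    ext l; simp [mem_arndtF]
  rw [h, finsum_mem_coe_finset]; rfl

lemma sum_getLastD_of_pos {m : ℕ} (hm : 1 ≤ m) (b : ℕ) :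
    ∑ r ∈ arndtF m, r.getLastD b = D m := by
  apply Finset.sum_congr rfl
  intro r hr
  obtain ⟨⟨-, hsum⟩, -⟩ := (mem_arndtF m r).mp hr
  match r with
  | [] => simp at hsum; omega
  | (x :: t) => rw [List.getLastD_cons, List.getLastD_cons]

lemma arndtInnerSum (s m : ℕ) :
    ∑ l ∈ (pairF s).biUnion (fun ab => (arndtF m).image fun l => ab.1 :: ab.2 :: l),
      l.getLastD 0
    = ∑ ab ∈ pairF s, ∑ r ∈ arndtF m, r.getLastD ab.2 := by
  rw [Finset.sum_biUnion]
  · apply Finset.sum_congr rfl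
    intro ab _
    rw [Finset.sum_image (by intro x _ y _ h; simpa using h)]
    apply Finset.sum_congr rfl
    intro r _
    rw [List.getLastD_cons, List.getLastD_cons]
  · intro x _ y _ hxy
    refine Finset.disjoint_left.mpr ?_
    intro l hlx hly
    simp only [Finset.mem_image] at hlx hly
    obtain ⟨r, _, rfl⟩ := hlx
    obtain ⟨r', _, heq⟩ := hly
    apply hxy
    rw [List.cons.injEq, List.cons.injEq] at heq
    exact (Prod.ext heq.1 heq.2.1).symm

lemma D_rec (n : ℕ) :
    D (n + 1) = (n + 1) + wF (n + 1) +
      ∑ m ∈ Finset.Ico 1 (n + 1), (pairF (n + 1 - m)).card * D m := by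
  have hni : [n + 1] ∉ (Finset.range (n + 1)).attach.biUnion
      (fun (m : {x // x ∈ Finset.range (n + 1)}) =>
      (pairF (n + 1 - m.1)).biUnion fun ab => (arndtF m.1).image fun l => ab.1 :: ab.2 :: l) := by
    intro h
    simp only [Finset.mem_biUnion, Finset.mem_image] at h
    obtain ⟨m, -, ab, -, r, -, heq⟩ := h
    simp [List.cons.injEq] at heq
  have houter : Set.PairwiseDisjoint
      (((Finset.range (n + 1)).attach : Finset {x // x ∈ Finset.range (n + 1)}) : Set _)
      (fun (m : {x // x ∈ Finset.range (n + 1)}) =>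
      (pairF (n + 1 - m.1)).biUnion fun ab => (arndtF m.1).image fun l => ab.1 :: ab.2 :: l) := by
    intro x _ y _ hxy
    refine Finset.disjoint_left.mpr ?_
    intro l hlx hly
    simp only [Finset.mem_biUnion, Finset.mem_image] at hlx hly
    obtain ⟨ab, -, r, hr, rfl⟩ := hlx
    obtain ⟨ab', -, r', hr', heq⟩ := hly
    rw [List.cons.injEq, List.cons.injEq] at heq
    obtain ⟨-, -, hrr⟩ := heq
    apply hxy; apply Subtype.ext
    have h1 := ((mem_arndtF _ r).mp hr).1.2
    have h2 := ((mem_arndtF _ r').mp hr').1.2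
    rw [← h1, ← h2, hrr]
  rw [show D (n + 1) = ∑ l ∈ arndtF (n + 1), l.getLastD 0 from rfl, arndtF,
    Finset.sum_insert hni, Finset.sum_biUnion houter]
  simp only [arndtInnerSum]
  rw [Finset.sum_attach (Finset.range (n + 1))
    (fun m => ∑ ab ∈ pairF (n + 1 - m), ∑ r ∈ arndtF m, r.getLastD ab.2)]
  rw [Finset.range_eq_Ico, Finset.sum_eq_sum_Ico_succ_bot (by omega)]
  have h0 : ∑ ab ∈ pairF (n + 1 - 0), ∑ r ∈ arndtF 0, r.getLastD ab.2 = wF (n + 1) := by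
    rw [arndtF]
    simp [wF]
  have h1 : ∀ m ∈ Finset.Ico 1 (n + 1),
      (∑ ab ∈ pairF (n + 1 - m), ∑ r ∈ arndtF m, r.getLastD ab.2)
      = (pairF (n + 1 - m)).card * D m := by
    intro m hm
    rw [Finset.sum_congr rfl (fun ab _ => sum_getLastD_of_pos (Finset.mem_Ico.mp hm).1 ab.2),
      Finset.sum_const, smul_eq_mul]
  rw [Finset.sum_congr rfl h1, h0]
  have : ([n + 1] : List ℕ).getLastD 0 = n + 1 := rfl
  rw [this]
  omega

lemma sum_Ico_top2 (f : ℕ → ℕ) (k : ℕ) :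
    ∑ m ∈ Finset.Ico 1 (k + 2 + 1), f m
      = (∑ m ∈ Finset.Ico 1 (k + 1), f m) + f (k + 1) + f (k + 2) := by
  rw [Finset.sum_Ico_succ_top (by omega), show k + 2 = k + 1 + 1 from rfl,
    Finset.sum_Ico_succ_top (by omega)]

lemma sum_Ico_top4 (f : ℕ → ℕ) (k : ℕ) :
    ∑ m ∈ Finset.Ico 1 (k + 4 + 1), f m
      = (∑ m ∈ Finset.Ico 1 (k + 1), f m) + f (k + 1) + f (k + 2) + f (k + 3) + f (k + 4) := by
  rw [Finset.sum_Ico_succ_top (by omega), show k + 4 = k + 3 + 1 from rfl,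
    Finset.sum_Ico_succ_top (by omega), show k + 3 = k + 2 + 1 from rfl, sum_Ico_top2]

lemma Dstar (k : ℕ) :
    D (k + 5) + ((k + 3) + wF (k + 3)) =
      (k + 5) + wF (k + 5) + D (k + 3) + (∑ m ∈ Finset.Ico 1 (k + 1), D m)
        + D (k + 1) + D (k + 2) := by
  have e5 : D (k + 5) = (k + 5) + wF (k + 5)
      + ((∑ m ∈ Finset.Ico 1 (k + 1), (pairF (k + 3 - m)).card * D m)
        + ((∑ m ∈ Finset.Ico 1 (k + 1), D m) + D (k + 1) + D (k + 2))) := by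
    rw [show k + 5 = (k + 4) + 1 from rfl, D_rec, sum_Ico_top4]
    have hc : ∀ m ∈ Finset.Ico 1 (k + 1),
        (pairF (k + 4 + 1 - m)).card * D m = (pairF (k + 3 - m)).card * D m + D m := by
      intro m hm
      have hm' := Finset.mem_Ico.mp hm
      rw [pairF_card, pairF_card]
      have h : (k + 4 + 1 - m - 1) / 2 = (k + 3 - m - 1) / 2 + 1 := by omega
      rw [h]; ring
    rw [Finset.sum_congr rfl hc, Finset.sum_add_distrib]
    have t1 : (pairF (k + 4 + 1 - (k + 1))).card = 1 := by rw [pairF_card]; omega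
    have t2 : (pairF (k + 4 + 1 - (k + 2))).card = 1 := by rw [pairF_card]; omega
    have t3 : (pairF (k + 4 + 1 - (k + 3))).card = 0 := by rw [pairF_card]; omega
    have t4 : (pairF (k + 4 + 1 - (k + 4))).card = 0 := by rw [pairF_card]; omega
    rw [t1, t2, t3, t4]
    ring
  have e3 : D (k + 3) = (k + 3) + wF (k + 3)
      + (∑ m ∈ Finset.Ico 1 (k + 1), (pairF (k + 3 - m)).card * D m) := by
    rw [show k + 3 = (k + 2) + 1 from rfl, D_rec, sum_Ico_top2]
    have t1 : (pairF (k + 2 + 1 - (k + 1))).card = 0 := by rw [pairF_card]; omega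
    have t2 : (pairF (k + 2 + 1 - (k + 2))).card = 0 := by rw [pairF_card]; omega
    rw [t1, t2]
    have hc : ∀ m ∈ Finset.Ico 1 (k + 1),
        (pairF (k + 2 + 1 - m)).card * D m = (pairF (k + 3 - m)).card * D m :=
      fun m _ => rfl
    rw [Finset.sum_congr rfl hc]
    ring
  omega

lemma D_threeterm (k : ℕ) : D (k + 6) = D (k + 5) + D (k + 4) + (k + 6) % 2 := by
  have h1 := Dstar k
  have h2 := Dstar (k + 1)
  simp only [show k + 1 + 5 = k + 6 from rfl, show k + 1 + 3 = k + 4 from rfl,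
    show k + 1 + 2 = k + 3 from rfl, show k + 1 + 1 = k + 2 from rfl] at h2
  have h3 : ∑ m ∈ Finset.Ico 1 (k + 2), D m
      = (∑ m ∈ Finset.Ico 1 (k + 1), D m) + D (k + 1) := by
    rw [show k + 2 = k + 1 + 1 from rfl]
    exact Finset.sum_Ico_succ_top (by omega) D
  have h4 := wF_step (k + 3) (by omega)
  have h5 := wF_step (k + 4) (by omega)
  simp only [show k + 3 + 2 = k + 5 from rfl, show k + 3 + 1 = k + 4 from rfl] at h4
  simp only [show k + 4 + 2 = k + 6 from rfl, show k + 4 + 1 = k + 5 from rfl] at h5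
  omega

example : wF 1 = 0 := by decide
example : wF 5 = 3 := by decide

lemma D1 : D 1 = 1 := by
  have h := D_rec 0
  norm_num [Finset.sum_Ico_eq_sum_range, wF_eq] at h
  exact h

lemma D2 : D 2 = 2 := by
  have h := D_rec 1
  norm_num [Finset.sum_Ico_eq_sum_range, Finset.sum_range_succ, wF_eq, pairF_card, D1] at h
  exact h

lemma D3 : D 3 = 4 := by
  have h := D_rec 2
  norm_num [Finset.sum_Ico_eq_sum_range, Finset.sum_range_succ, wF_eq, pairF_card, D1, D2] at h
  exact h

lemma D4 : D 4 = 6 := by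
  have h := D_rec 3
  norm_num [Finset.sum_Ico_eq_sum_range, Finset.sum_range_succ, wF_eq, pairF_card, D1, D2, D3] at h
  exact h

lemma D5 : D 5 = 11 := by
  have h := D_rec 4
  norm_num [Finset.sum_Ico_eq_sum_range, Finset.sum_range_succ, wF_eq, pairF_card,
    D1, D2, D3, D4] at h
  exact h

lemma D_closed : ∀ k : ℕ, D (k + 1) + k % 2 = Nat.fib (k + 2) + Nat.fib k := by
  intro k
  induction k using Nat.strong_induction_on with
  | _ k ih =>
    match k with
    | 0 => rw [show (0:ℕ) + 1 = 1 from rfl, D1]; decide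
    | 1 => rw [show (1:ℕ) + 1 = 2 from rfl, D2]; decide
    | 2 => rw [show (2:ℕ) + 1 = 3 from rfl, D3]; decide
    | 3 => rw [show (3:ℕ) + 1 = 4 from rfl, D4]; decide
    | 4 => rw [show (4:ℕ) + 1 = 5 from rfl, D5]; decide
    | (j + 5) =>
      have h := D_threeterm j
      have i1 := ih (j + 4) (by omega)
      have i2 := ih (j + 3) (by omega)
      simp only [show j + 4 + 1 = j + 5 from rfl, show j + 4 + 2 = j + 6 from rfl] at i1
      simp only [show j + 3 + 1 = j + 4 from rfl, show j + 3 + 2 = j + 5 from rfl] at i2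
      have f1 : Nat.fib (j + 5 + 2) = Nat.fib (j + 5) + Nat.fib (j + 5 + 1) := Nat.fib_add_two
      have f2 : Nat.fib (j + 5) = Nat.fib (j + 3) + Nat.fib (j + 3 + 1) := Nat.fib_add_two
      have f3 : Nat.fib (j + 6) = Nat.fib (j + 4) + Nat.fib (j + 4 + 1) := Nat.fib_add_two
      simp only [show j + 5 + 2 = j + 7 from rfl, show j + 5 + 1 = j + 6 from rfl,
        show j + 3 + 1 = j + 4 from rfl, show j + 4 + 1 = j + 5 from rfl] at f1 f2 f3 ⊢
      omega

lemma lastSum_closed (k : ℕ) : lastSum (k + 1) + k % 2 = Nat.fib (k + 2) + Nat.fib k := by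
  rw [lastSum_eq]; exact D_closed k

open Filter Real Topology

open scoped goldenRatio

lemma goldConj_abs_lt_one : |ψ| < 1 := by
  have h1 := neg_one_lt_goldenConj
  have h2 := goldenConj_neg
  rw [abs_lt]; constructor <;> linarith

lemma sqrt_five_eq : Real.sqrt 5 = 2 * φ - 1 := by
  have a := goldenRatio_sub_goldenConj
  have b := goldenRatio_add_goldenConj
  linarith

lemma fib_tendsto_atTop : Tendsto (fun n : ℕ => (Nat.fib n : ℝ)) atTop atTop := by
  apply tendsto_natCast_atTop_atTop.comp
  apply tendsto_atTop_mono' atTop (eventually_atTop.mpr ⟨5, fun n hn => Nat.le_fib_self hn⟩)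
  exact tendsto_id



/-- the expected last part of a uniformly random Arndt composition of `n`
tends to `√5`, i.e. `d(n)/F_n → √5` as `n → ∞`. -/
theorem expected_last_part_asymptotic :
    Filter.Tendsto (fun n : ℕ => (lastSum n : ℝ) / (Nat.fib n : ℝ))
      Filter.atTop (nhds (Real.sqrt 5)) := by
  have hfpos : ∀ n : ℕ, 1 ≤ n → (0:ℝ) < (Nat.fib n : ℝ) := by
    intro n hn
    exact_mod_cast Nat.fib_pos.mpr hn
  set g : ℕ → ℝ := fun n =>
    Real.sqrt 5 + 2 * ψ ^ n / (Nat.fib n : ℝ) - ((1 - n % 2 : ℕ) : ℝ) / (Nat.fib n : ℝ) with hg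
  have t1 : Tendsto (fun n : ℕ => 2 * ψ ^ n / (Nat.fib n : ℝ)) atTop (𝓝 0) := by
    apply squeeze_zero_norm' (a := fun n : ℕ => 2 * |ψ| ^ n)
    · filter_upwards [eventually_atTop.mpr ⟨1, fun n hn => hn⟩] with n hn
      have h1 : (1:ℝ) ≤ (Nat.fib n : ℝ) := by
        have := Nat.fib_pos.mpr hn
        exact_mod_cast this
      rw [norm_div, norm_mul, norm_pow]
      simp only [Real.norm_eq_abs, Nat.abs_cast]
      rw [abs_of_nonneg (by norm_num : (0:ℝ) ≤ 2)]
      exact div_le_self (by positivity) h1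
    · have := (tendsto_pow_atTop_nhds_zero_of_abs_lt_one (r := |ψ|)
        (by rw [abs_abs]; exact goldConj_abs_lt_one)).const_mul 2
      simpa using this
  have t2 : Tendsto (fun n : ℕ => ((1 - n % 2 : ℕ) : ℝ) / (Nat.fib n : ℝ)) atTop (𝓝 0) := by
    apply squeeze_zero_norm' (a := fun n : ℕ => ((Nat.fib n : ℝ))⁻¹)
    · filter_upwards [eventually_atTop.mpr ⟨1, fun n hn => hn⟩] with n hn
      have h1 : (1:ℝ) ≤ (Nat.fib n : ℝ) := by
        have := Nat.fib_pos.mpr hn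
        exact_mod_cast this
      have h2 : ((1 - n % 2 : ℕ) : ℝ) ≤ 1 := by
        have : (1 - n % 2 : ℕ) ≤ 1 := by omega
        exact_mod_cast this
      rw [norm_div]
      simp only [Real.norm_eq_abs, Nat.abs_cast]
      rw [inv_eq_one_div, div_le_div_iff_of_pos_right (by linarith : (0:ℝ) < (Nat.fib n : ℝ))]
      exact h2
    · exact fib_tendsto_atTop.inv_tendsto_atTop
  have tg : Tendsto g atTop (𝓝 (Real.sqrt 5)) := by
    have tconst : Tendsto (fun _ : ℕ => Real.sqrt 5) atTop (𝓝 (Real.sqrt 5)) :=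
      tendsto_const_nhds
    have := (tconst.add t1).sub t2
    simpa using this
  refine tg.congr' ?_
  filter_upwards [eventually_atTop.mpr ⟨1, fun n hn => hn⟩] with n hn
  obtain ⟨k, rfl⟩ : ∃ k, n = k + 1 := ⟨n - 1, by omega⟩
  have hb : (Nat.fib (k + 1) : ℝ) ≠ 0 := ne_of_gt (hfpos (k + 1) (by omega))
  have key : (Nat.fib (k + 2) : ℝ) + Nat.fib k
      = Real.sqrt 5 * Nat.fib (k + 1) + 2 * ψ ^ (k + 1) := by
    have h1 := fib_succ_sub_goldenRatio_mul_fib (k + 1)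
    simp only [show k + 1 + 1 = k + 2 from rfl] at h1
    have h2 : (Nat.fib (k + 2) : ℝ) = Nat.fib k + Nat.fib (k + 1) := by
      exact_mod_cast congrArg (fun x : ℕ => (x : ℝ)) (Nat.fib_add_two (n := k))
    rw [sqrt_five_eq]
    linear_combination 2 * h1 - h2
  have hls : (lastSum (k + 1) : ℝ) = (Nat.fib (k + 2) : ℝ) + Nat.fib k - ((k % 2 : ℕ) : ℝ) := by
    have h := lastSum_closed k
    have h' := congrArg (fun x : ℕ => (x : ℝ)) h
    push_cast at h'
    push_cast
    linarith
  have hc : ((1 - (k + 1) % 2 : ℕ) : ℝ) = ((k % 2 : ℕ) : ℝ) := by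
    congr 1
    omega
  show g (k + 1) = (lastSum (k + 1) : ℝ) / (Nat.fib (k + 1) : ℝ)
  simp only [hg]
  rw [hls, hc, key]
  field_simp
end
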